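/- arXiv:2407.04341 — 5 statements merged into one kernel-verified Lean document; each statement's English description precedes it below -/
import Mathlib

section
/- Every P1-admissible curve that starts in the set B₁ remains in B₁: if q = (x,y,z) : [0,T] → ℝ³ is P1-admissible and q(0) ∈ B₁, then q(t) ∈ B₁ for all t ∈ [0,T]. In particular, every P1-admissible curve starting at the origin (0,0,0) stays in B₁ for all time. -/
open MeasureTheory Set

noncomputable section

/-- A curve `(x, y, z) : [0, T] → ℝ³` is admissible for the first flat sub-Lorentzian
problem on the Martinet distribution: it is Lipschitz on `[0, T]` and for a.e.
`t ∈ [0, T]` it is differentiable with `y' ≥ |x'|` and `z' = x² y' / 2`. -/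
def P1Admissible (T : ℝ) (x y z : ℝ → ℝ) : Prop :=
  0 ≤ T ∧
  (∃ K : NNReal, LipschitzOnWith K x (Icc 0 T) ∧ LipschitzOnWith K y (Icc 0 T) ∧
    LipschitzOnWith K z (Icc 0 T)) ∧
  ∀ᵐ t ∂(volume.restrict (Icc 0 T)),
    HasDerivAt x (deriv x t) t ∧ HasDerivAt y (deriv y t) t ∧ HasDerivAt z (deriv z t) t ∧
    |deriv x t| ≤ deriv y t ∧ deriv z t = (x t) ^ 2 * deriv y t / 2

/-- The sub-Lorentzian length of an admissible curve of the first problem. -/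
def P1Length (T : ℝ) (x y : ℝ → ℝ) : ℝ :=
  ∫ t in (0:ℝ)..T, Real.sqrt ((deriv y t) ^ 2 - (deriv x t) ^ 2)

/-- `q₁` is reachable from the origin by a P1-admissible curve. -/
def P1Reaches (q₁ : ℝ × ℝ × ℝ) : Prop :=
  ∃ (T : ℝ) (x y z : ℝ → ℝ), P1Admissible T x y z ∧
    x 0 = 0 ∧ y 0 = 0 ∧ z 0 = 0 ∧ (x T, y T, z T) = q₁

/-- The sub-Lorentzian distance from the origin in the first problem: the supremum
of lengths of P1-admissible curves from the origin to `q₁` (`0` if there are none). -/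
def P1dist (q₁ : ℝ × ℝ × ℝ) : ℝ :=
  sSup (insert 0 {l : ℝ | ∃ (T : ℝ) (x y z : ℝ → ℝ), P1Admissible T x y z ∧
    x 0 = 0 ∧ y 0 = 0 ∧ z 0 = 0 ∧ (x T, y T, z T) = q₁ ∧ l = P1Length T x y})

/-- The candidate attainable set `B₁` of the first problem. -/
def B1 : Set (ℝ × ℝ × ℝ) :=
  {p | |p.1| ≤ p.2.1 ∧ |p.1| ^ 3 / 6 ≤ p.2.2 ∧
    p.2.2 ≤ (p.2.1 ^ 3 + 3 * p.1 ^ 2 * p.2.1 + 3 * |p.1| * p.2.1 ^ 2 - 3 * |p.1| ^ 3) / 24}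


open MeasureTheory Set Filter Function

lemma aux_mono {f : ℝ → ℝ} {a b M : ℝ} (hab : a ≤ b)
    (hlip : ∀ s ∈ Icc a b, ∀ t ∈ Icc a b, |f s - f t| ≤ M * |s - t|)
    (hd : ∀ᵐ t ∂(volume.restrict (Ioo a b)), ∃ d, 0 ≤ d ∧ HasDerivAt f d t) :
    f a ≤ f b := by
  rcases hab.eq_or_lt with rfl | hab'
  · exact le_refl _
  set K : ℝ := max M 0 with hK
  have hK0 : 0 ≤ K := le_max_right _ _
  have hlip' : ∀ s ∈ Icc a b, ∀ t ∈ Icc a b, |f s - f t| ≤ K * |s - t| := fun s hs t ht =>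
    (hlip s hs t ht).trans (mul_le_mul_of_nonneg_right (le_max_left _ _) (abs_nonneg _))
  set F : ℝ → ℝ := fun t => f (min b (max a t)) with hFdef
  have hmem : ∀ t : ℝ, min b (max a t) ∈ Icc a b := fun t =>
    ⟨le_min hab (le_max_left _ _), min_le_left _ _⟩
  have hclamp : ∀ s t : ℝ, |min b (max a s) - min b (max a t)| ≤ |s - t| := by
    intro s t
    refine (abs_min_sub_min_le_max b (max a s) b (max a t)).trans ?_
    have h2 : |max a s - max a t| ≤ |s - t| := by
      have := abs_max_sub_max_le_max a s a t
      simpa using this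
    simpa using h2
  have hFlip : ∀ s t : ℝ, |F s - F t| ≤ K * |s - t| := by
    intro s t
    refine (hlip' _ (hmem s) _ (hmem t)).trans ?_
    exact mul_le_mul_of_nonneg_left (hclamp s t) hK0
  have hFeq : ∀ t ∈ Icc a b, F t = f t := by
    intro t ht
    simp only [hFdef, max_eq_right ht.1, min_eq_right ht.2]
  set g : ℝ → ℝ := fun t => F t + K * t with hgdef
  have hg : Monotone g := by
    intro s t hst
    have h1 := hFlip s t
    have h2 := (abs_le.1 h1).2
    have h3 : |s - t| = t - s := by rw [abs_sub_comm]; exact abs_of_nonneg (by linarith)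
    simp only [hgdef]
    rw [h3] at h2
    nlinarith [h2]
  have hgcont : Continuous g := by
    have hFcont : Continuous F := by
      rw [Metric.continuous_iff]
      intro s ε hε
      rcases eq_or_lt_of_le hK0 with hK' | hK'
      · exact ⟨1, one_pos, fun t _ => by
          have := hFlip t s
          rw [← hK'] at this
          simp only [zero_mul] at this
          have : F t = F s := by
            have h0 := abs_nonneg (F t - F s)
            have : |F t - F s| = 0 := le_antisymm this h0
            linarith [abs_eq_zero.1 this |> sub_eq_zero.1]
          simp [Real.dist_eq, this, hε]⟩
      · refine ⟨ε / K, by positivity, fun t ht => ?_⟩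
        have := hFlip t s
        rw [Real.dist_eq] at ht ⊢
        calc |F t - F s| ≤ K * |t - s| := this
          _ < K * (ε / K) := by exact mul_lt_mul_of_pos_left ht hK'
          _ = ε := by field_simp
    exact hFcont.add (continuous_const.mul continuous_id)
  set μ := hg.stieltjesFunction.measure with hμdef
  have hsf : ∀ t : ℝ, hg.stieltjesFunction t = g t := by
    intro t
    rw [hg.stieltjesFunction_eq]
    exact rightLim_eq_of_tendsto (h := nhdsGT_neBot t)
      ((hgcont.continuousAt).tendsto.mono_left nhdsWithin_le_nhds)
  -- a.e. lower bound on the Radon–Nikodym derivative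
  have hae1 : ∀ᵐ t ∂(volume.restrict (Ioo a b)),
      HasDerivAt g ((μ.rnDeriv volume t).toReal) t := ae_restrict_of_ae hg.ae_hasDerivAt
  have key : ∀ᵐ t ∂(volume.restrict (Ioo a b)),
      ENNReal.ofReal K ≤ μ.rnDeriv volume t := by
    filter_upwards [hae1, hd, ae_restrict_mem measurableSet_Ioo] with t hg' hf' ht
    obtain ⟨d, hd0, hdf⟩ := hf'
    have hFf : F =ᶠ[nhds t] f := by
      filter_upwards [isOpen_Ioo.mem_nhds ht] with s hs
      exact hFeq s (Ioo_subset_Icc_self hs)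
    have hdF : HasDerivAt F d t := hdf.congr_of_eventuallyEq hFf
    have hdg : HasDerivAt g (d + K) t := by
      have h2 : HasDerivAt (fun t : ℝ => K * t) K t := by
        simpa using (hasDerivAt_id t).const_mul K
      exact hdF.add h2
    have huniq : (μ.rnDeriv volume t).toReal = d + K := hg'.unique hdg
    by_cases hfin : μ.rnDeriv volume t = ⊤
    · simp [hfin]
    · rw [← ENNReal.ofReal_toReal hfin]
      exact ENNReal.ofReal_le_ofReal (by rw [huniq]; linarith)
  have step : ENNReal.ofReal K * volume (Ioo a b) ≤ μ (Ioo a b) := by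
    calc ENNReal.ofReal K * volume (Ioo a b)
        = ∫⁻ _ in Ioo a b, ENNReal.ofReal K ∂volume := by
          rw [MeasureTheory.setLIntegral_const]
      _ ≤ ∫⁻ t in Ioo a b, μ.rnDeriv volume t ∂volume := lintegral_mono_ae key
      _ = volume.withDensity (μ.rnDeriv volume) (Ioo a b) :=
          (withDensity_apply _ measurableSet_Ioo).symm
      _ ≤ μ (Ioo a b) := by
          exact Measure.le_iff'.1 (Measure.withDensity_rnDeriv_le μ volume) _
  have hμIoo : μ (Ioo a b) ≤ ENNReal.ofReal (g b - g a) := by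
    calc μ (Ioo a b) ≤ μ (Ioc a b) := measure_mono Ioo_subset_Ioc_self
      _ = ENNReal.ofReal (hg.stieltjesFunction b - hg.stieltjesFunction a) :=
          hg.stieltjesFunction.measure_Ioc a b
      _ = ENNReal.ofReal (g b - g a) := by rw [hsf, hsf]
  have hvol : volume (Ioo a b) = ENNReal.ofReal (b - a) := Real.volume_Ioo
  have hfinal : K * (b - a) ≤ g b - g a := by
    have h1 : ENNReal.ofReal (K * (b - a)) ≤ ENNReal.ofReal (g b - g a) := by
      rw [ENNReal.ofReal_mul hK0, ← hvol]
      exact step.trans hμIoo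
    exact (ENNReal.ofReal_le_ofReal_iff (by have := hg (le_of_lt hab'); linarith)).1 h1
  have hFa : F a = f a := hFeq a ⟨le_refl a, hab⟩
  have hFb : F b = f b := hFeq b ⟨hab, le_refl b⟩
  simp only [hgdef] at hfinal
  rw [hFa, hFb] at hfinal
  linarith

lemma aux_mono_on {f : ℝ → ℝ} {a b M : ℝ}
    (hlip : ∀ s ∈ Icc a b, ∀ t ∈ Icc a b, |f s - f t| ≤ M * |s - t|)
    (hd : ∀ᵐ t ∂(volume.restrict (Ioo a b)), ∃ d, 0 ≤ d ∧ HasDerivAt f d t) :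
    ∀ s ∈ Icc a b, ∀ t ∈ Icc a b, s ≤ t → f s ≤ f t := by
  intro s hs t ht hst
  refine aux_mono hst (fun u hu v hv => hlip u ?_ v ?_) ?_
  · exact ⟨hs.1.trans hu.1, hu.2.trans ht.2⟩
  · exact ⟨hs.1.trans hv.1, hv.2.trans ht.2⟩
  · exact ae_restrict_of_ae_restrict_of_subset (Ioo_subset_Ioo hs.1 ht.2) hd
open MeasureTheory Set Filter Function Topology

lemma aux_countable_isolated (S : Set ℝ) :
    {t | t ∈ S ∧ ¬ (𝓝[S \ {t}] t).NeBot}.Countable := by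
  obtain ⟨b, hbc, -, hb⟩ := TopologicalSpace.exists_countable_basis ℝ
  have hsub : {t | t ∈ S ∧ ¬ (𝓝[S \ {t}] t).NeBot} ⊆
      ⋃ U ∈ {U ∈ b | (U ∩ S).Subsingleton}, U ∩ S := by
    rintro t ⟨htS, ht⟩
    rw [not_neBot] at ht
    have hempty : (∅ : Set ℝ) ∈ 𝓝[S \ {t}] t := by rw [ht]; exact mem_bot
    rw [mem_nhdsWithin] at hempty
    obtain ⟨U, hUopen, htU, hU⟩ := hempty
    obtain ⟨V, hVb, htV, hVU⟩ := hb.mem_nhds_iff.1 (hUopen.mem_nhds htU)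
    have hkey : ∀ r ∈ V ∩ S, r = t := by
      rintro r ⟨hrV, hrS⟩
      by_contra hne
      exact hU ⟨hVU hrV, hrS, hne⟩
    refine mem_biUnion ⟨hVb, fun p hp q hq => by rw [hkey p hp, hkey q hq]⟩ ⟨htV, htS⟩
  refine Set.Countable.mono hsub ?_
  refine Set.Countable.biUnion (hbc.mono (sep_subset _ _)) ?_
  rintro U ⟨-, hU⟩
  exact hU.countable

lemma aux_acc (x : ℝ → ℝ) :
    ∀ᵐ t : ℝ, x t = 0 → (𝓝[{s | x s = 0} \ {t}] t).NeBot := by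
  have h := (aux_countable_isolated {s | x s = 0}).measure_zero volume
  rw [← compl_mem_ae_iff] at h
  filter_upwards [h] with t ht htx
  simp only [mem_compl_iff, mem_setOf_eq, not_and, not_not] at ht
  exact ht htx

lemma aux_w (x : ℝ → ℝ) (t : ℝ) (x' : ℝ) (hx : HasDerivAt x x' t)
    (hacc : x t = 0 → (𝓝[{s | x s = 0} \ {t}] t).NeBot) :
    ∃ wd, HasDerivAt (fun s => |x s|) wd t ∧ x t * x' = wd * |x t| ∧ |wd| ≤ |x'| := by
  rcases lt_trichotomy (x t) 0 with hlt | heq | hgt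
  · have hev : ∀ᶠ s in nhds t, x s < 0 :=
      hx.continuousAt.eventually_lt continuousAt_const hlt
    have heq : (fun s => |x s|) =ᶠ[nhds t] (fun s => -x s) := by
      filter_upwards [hev] with s hs; exact abs_of_neg hs
    refine ⟨-x', hx.neg.congr_of_eventuallyEq heq, ?_, by rw [abs_neg]⟩
    rw [abs_of_neg hlt]; ring
  · -- x t = 0: show x' = 0 using the accumulation of zeros
    have hne := hacc heq
    have h1 : Tendsto (slope x t) (𝓝[{s | x s = 0} \ {t}] t) (𝓝 x') :=
      (hasDerivAt_iff_tendsto_slope.1 hx).mono_left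
        (nhdsWithin_mono t (fun s hs => hs.2))
    have h2 : Tendsto (slope x t) (𝓝[{s | x s = 0} \ {t}] t) (𝓝 0) := by
      refine Tendsto.congr' ?_ tendsto_const_nhds
      filter_upwards [eventually_mem_nhdsWithin] with s hs
      have hxs : x s = 0 := hs.1
      simp [slope_def_field, hxs, heq]
    have hx0 : x' = 0 := tendsto_nhds_unique h1 h2
    refine ⟨0, ?_, by simp [heq], by simp⟩
    rw [hasDerivAt_iff_tendsto_slope]
    have habs : Tendsto (fun s => |slope x t s|) (𝓝[≠] t) (𝓝 0) := by
      have := (hasDerivAt_iff_tendsto_slope.1 hx).abs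
      rwa [hx0, abs_zero] at this
    refine squeeze_zero_norm' ?_ habs
    filter_upwards with s
    rcases eq_or_ne s t with rfl | hst
    · simp [slope_def_field]
    · rw [slope_def_field, slope_def_field, Real.norm_eq_abs, abs_div, abs_div]
      have hpos : 0 < |s - t| := abs_pos.2 (sub_ne_zero.2 hst)
      exact div_le_div_of_nonneg_right (abs_abs_sub_abs_le_abs_sub (x s) (x t)) hpos.le
  · have hev : ∀ᶠ s in nhds t, 0 < x s :=
      continuousAt_const.eventually_lt hx.continuousAt hgt
    have heq : (fun s => |x s|) =ᶠ[nhds t] x := by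
      filter_upwards [hev] with s hs; exact abs_of_pos hs
    refine ⟨x', hx.congr_of_eventuallyEq heq, ?_, le_refl _⟩
    rw [abs_of_pos hgt]; ring

lemma aux_cube {a c B D : ℝ} (ha : |a| ≤ B) (hc : |c| ≤ B) (h : |a - c| ≤ D) :
    |a ^ 3 - c ^ 3| ≤ 3 * B ^ 2 * D := by
  have hD : 0 ≤ D := le_trans (abs_nonneg _) h
  have hB : 0 ≤ B := le_trans (abs_nonneg _) ha
  have key : |a ^ 2 + a * c + c ^ 2| ≤ 3 * B ^ 2 := by
    have h1 : |a * c| ≤ B ^ 2 := by rw [abs_mul]; nlinarith [abs_nonneg a, abs_nonneg c]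
    calc |a ^ 2 + a * c + c ^ 2| ≤ |a ^ 2 + a * c| + |c ^ 2| := abs_add_le _ _
      _ ≤ |a ^ 2| + |a * c| + |c ^ 2| := by linarith [abs_add_le (a ^ 2) (a * c)]
      _ ≤ 3 * B ^ 2 := by
          rw [abs_pow, abs_pow]
          nlinarith [abs_nonneg a, abs_nonneg c]
  have hid : a ^ 3 - c ^ 3 = (a - c) * (a ^ 2 + a * c + c ^ 2) := by ring
  calc |a ^ 3 - c ^ 3| = |a - c| * |a ^ 2 + a * c + c ^ 2| := by rw [hid, abs_mul]
    _ ≤ D * (3 * B ^ 2) := mul_le_mul h key (abs_nonneg _) hD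
    _ = 3 * B ^ 2 * D := by ring

lemma aux_sqmul {a b c d B D : ℝ} (ha : |a| ≤ B) (hb : |b| ≤ B) (hc : |c| ≤ B)
    (h1 : |a - c| ≤ D) (h2 : |b - d| ≤ D) :
    |a ^ 2 * b - c ^ 2 * d| ≤ 3 * B ^ 2 * D := by
  have hD : 0 ≤ D := le_trans (abs_nonneg _) h1
  have hB : 0 ≤ B := le_trans (abs_nonneg _) ha
  have hid : a ^ 2 * b - c ^ 2 * d = (a - c) * (a + c) * b + c * c * (b - d) := by ring
  have h3 : |a + c| ≤ 2 * B := (abs_add_le a c).trans (by linarith)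
  have h4 : |a - c| * |a + c| ≤ D * (2 * B) := mul_le_mul h1 h3 (abs_nonneg _) hD
  have h5 : |a - c| * |a + c| * |b| ≤ D * (2 * B) * B :=
    mul_le_mul h4 hb (abs_nonneg _) (by positivity)
  have h6 : |c| * |c| * |b - d| ≤ B * B * D :=
    mul_le_mul (mul_le_mul hc hc (abs_nonneg _) hB) h2 (abs_nonneg _) (by positivity)
  calc |a ^ 2 * b - c ^ 2 * d| ≤ |(a - c) * (a + c) * b| + |c * c * (b - d)| := by
        rw [hid]; exact abs_add_le _ _
    _ = |a - c| * |a + c| * |b| + |c| * |c| * |b - d| := by rw [abs_mul, abs_mul, abs_mul, abs_mul]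
    _ ≤ D * (2 * B) * B + B * B * D := by linarith
    _ = 3 * B ^ 2 * D := by ring

section AuxB1
open Filter Function Topology

set_option maxHeartbeats 2000000 in
/-- Every P1-admissible curve starting in `B₁` remains in `B₁`. -/
theorem B1_invariant (T : ℝ) (x y z : ℝ → ℝ) (h : P1Admissible T x y z)
    (h0 : (x 0, y 0, z 0) ∈ B1) :
    ∀ t ∈ Icc (0:ℝ) T, (x t, y t, z t) ∈ B1 := by
  obtain ⟨hT, ⟨K, hKx, hKy, hKz⟩, hae⟩ := h
  have hK0 : (0:ℝ) ≤ (K:ℝ) := K.coe_nonneg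
  have h0T : (0:ℝ) ∈ Icc (0:ℝ) T := ⟨le_refl 0, hT⟩
  simp only [B1, mem_setOf_eq] at h0
  obtain ⟨h01, h02, h03⟩ := h0
  -- basic Lipschitz estimates
  have hxd : ∀ s ∈ Icc (0:ℝ) T, ∀ t ∈ Icc (0:ℝ) T, |x s - x t| ≤ (K:ℝ) * |s - t| := by
    intro s hs t ht
    simpa [Real.dist_eq] using hKx.dist_le_mul s hs t ht
  have hyd : ∀ s ∈ Icc (0:ℝ) T, ∀ t ∈ Icc (0:ℝ) T, |y s - y t| ≤ (K:ℝ) * |s - t| := by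
    intro s hs t ht
    simpa [Real.dist_eq] using hKy.dist_le_mul s hs t ht
  have hzd : ∀ s ∈ Icc (0:ℝ) T, ∀ t ∈ Icc (0:ℝ) T, |z s - z t| ≤ (K:ℝ) * |s - t| := by
    intro s hs t ht
    simpa [Real.dist_eq] using hKz.dist_le_mul s hs t ht
  obtain ⟨B, hB0, hBx, hBy⟩ : ∃ B : ℝ, 0 ≤ B ∧ (∀ t ∈ Icc (0:ℝ) T, |x t| ≤ B) ∧
      (∀ t ∈ Icc (0:ℝ) T, |y t| ≤ B) := by
    refine ⟨|x 0| + |y 0| + (K:ℝ) * T, by positivity, ?_, ?_⟩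
    · intro t ht
      have h1 := hxd t ht 0 h0T
      have h2 : |t - 0| = t := by rw [sub_zero, abs_of_nonneg ht.1]
      rw [h2] at h1
      have h3 : (K:ℝ) * t ≤ (K:ℝ) * T := mul_le_mul_of_nonneg_left ht.2 hK0
      have h4 := abs_sub_abs_le_abs_sub (x t) (x 0)
      have h5 := abs_nonneg (y 0)
      linarith
    · intro t ht
      have h1 := hyd t ht 0 h0T
      have h2 : |t - 0| = t := by rw [sub_zero, abs_of_nonneg ht.1]
      rw [h2] at h1
      have h3 : (K:ℝ) * t ≤ (K:ℝ) * T := mul_le_mul_of_nonneg_left ht.2 hK0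
      have h4 := abs_sub_abs_le_abs_sub (y t) (y 0)
      have h5 := abs_nonneg (x 0)
      linarith
  have hae' : ∀ᵐ t ∂(volume.restrict (Ioo (0:ℝ) T)),
      HasDerivAt x (deriv x t) t ∧ HasDerivAt y (deriv y t) t ∧ HasDerivAt z (deriv z t) t ∧
      |deriv x t| ≤ deriv y t ∧ deriv z t = (x t) ^ 2 * deriv y t / 2 :=
    ae_restrict_of_ae_restrict_of_subset Ioo_subset_Icc_self hae
  ------------------------------------------------------------------
  -- Step 1 : |x t| ≤ y t
  ------------------------------------------------------------------
  have m1 := aux_mono_on (f := fun s => y s - x s) (a := 0) (b := T) (M := 2 * (K:ℝ))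
    (by
      intro s hs t ht
      have a1 := abs_le.1 (hxd s hs t ht)
      have a2 := abs_le.1 (hyd s hs t ht)
      beta_reduce; rw [abs_le]; constructor <;> [nlinarith; nlinarith])
    (by
      filter_upwards [hae'] with t ⟨hdx, hdy, hdz, hcon, hz⟩
      exact ⟨deriv y t - deriv x t, by linarith [le_abs_self (deriv x t)], hdy.sub hdx⟩)
  have m2 := aux_mono_on (f := fun s => y s + x s) (a := 0) (b := T) (M := 2 * (K:ℝ))
    (by
      intro s hs t ht
      have a1 := abs_le.1 (hxd s hs t ht)
      have a2 := abs_le.1 (hyd s hs t ht)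
      beta_reduce; rw [abs_le]; constructor <;> [nlinarith; nlinarith])
    (by
      filter_upwards [hae'] with t ⟨hdx, hdy, hdz, hcon, hz⟩
      exact ⟨deriv y t + deriv x t, by linarith [neg_abs_le (deriv x t)], hdy.add hdx⟩)
  have hIx : ∀ t ∈ Icc (0:ℝ) T, |x t| ≤ y t := by
    intro t ht
    have k1 := m1 0 h0T t ht ht.1
    have k2 := m2 0 h0T t ht ht.1
    beta_reduce at k1 k2
    have := abs_le.1 h01
    beta_reduce; rw [abs_le]; constructor <;> linarith
  ------------------------------------------------------------------
  -- Step 2 : |x t|³/6 ≤ z t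
  ------------------------------------------------------------------
  have m3 := aux_mono_on (f := fun s => z s - x s ^ 3 / 6) (a := 0) (b := T)
    (M := (K:ℝ) + B ^ 2 * (K:ℝ))
    (by
      intro s hs t ht
      have hc := aux_cube (hBx s hs) (hBx t ht) (hxd s hs t ht)
      have hzz := hzd s hs t ht
      have hnn : 0 ≤ B ^ 2 * ((K:ℝ) * |s - t|) := by positivity
      obtain ⟨hc1, hc2⟩ := abs_le.1 hc
      obtain ⟨hz1, hz2⟩ := abs_le.1 hzz
      beta_reduce; rw [abs_le]; constructor <;> nlinarith [hc1, hc2, hz1, hz2, hnn])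
    (by
      filter_upwards [hae'] with t ⟨hdx, hdy, hdz, hcon, hz⟩
      refine ⟨_, ?_, hdz.sub ((hdx.pow 3).div_const 6)⟩
      rw [hz]
      have h1 : deriv x t ≤ deriv y t := le_trans (le_abs_self _) hcon
      have h2 := sq_nonneg (x t)
      push_cast
      norm_num
      nlinarith [mul_nonneg h2 (sub_nonneg.2 h1)])
  have m4 := aux_mono_on (f := fun s => z s + x s ^ 3 / 6) (a := 0) (b := T)
    (M := (K:ℝ) + B ^ 2 * (K:ℝ))
    (by
      intro s hs t ht
      have hc := aux_cube (hBx s hs) (hBx t ht) (hxd s hs t ht)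
      have hzz := hzd s hs t ht
      have hnn : 0 ≤ B ^ 2 * ((K:ℝ) * |s - t|) := by positivity
      obtain ⟨hc1, hc2⟩ := abs_le.1 hc
      obtain ⟨hz1, hz2⟩ := abs_le.1 hzz
      beta_reduce; rw [abs_le]; constructor <;> nlinarith [hc1, hc2, hz1, hz2, hnn])
    (by
      filter_upwards [hae'] with t ⟨hdx, hdy, hdz, hcon, hz⟩
      refine ⟨_, ?_, hdz.add ((hdx.pow 3).div_const 6)⟩
      rw [hz]
      have h1 : -deriv x t ≤ deriv y t := le_trans (neg_le_abs _) hcon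
      have h2 := sq_nonneg (x t)
      push_cast
      norm_num
      nlinarith [mul_nonneg h2 (by linarith : (0:ℝ) ≤ deriv y t + deriv x t)])
  have hIz : ∀ t ∈ Icc (0:ℝ) T, |x t| ^ 3 / 6 ≤ z t := by
    intro t ht
    have k3 := m3 0 h0T t ht ht.1
    have k4 := m4 0 h0T t ht ht.1
    beta_reduce at k3 k4
    have e0 : |x 0| ^ 3 = |x 0 ^ 3| := (abs_pow (x 0) 3).symm
    have et : |x t| ^ 3 = |x t ^ 3| := (abs_pow (x t) 3).symm
    have l0u := le_abs_self (x 0 ^ 3)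
    have l0l := neg_abs_le (x 0 ^ 3)
    have hmax : |x t ^ 3| ≤ 6 * z t := by
      beta_reduce; rw [abs_le]; constructor <;> linarith
    linarith
  ------------------------------------------------------------------
  -- Step 3 : z t ≤ (y³ + 3x²y + 3|x|y² - 3|x|³)/24
  ------------------------------------------------------------------
  have hwdiff : ∀ s ∈ Icc (0:ℝ) T, ∀ t ∈ Icc (0:ℝ) T, |(abs (x s)) - (abs (x t))| ≤ (K:ℝ) * |s - t| :=
    fun s hs t ht => (abs_abs_sub_abs_le_abs_sub (x s) (x t)).trans (hxd s hs t ht)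
  have hBw : ∀ t ∈ Icc (0:ℝ) T, |(abs (x t))| ≤ B := by
    intro t ht; rw [abs_abs]; exact hBx t ht
  have m5 := aux_mono_on
    (f := fun s => (y s ^ 3 + 3 * (x s ^ 2 * y s) + 3 * (|x s| * y s ^ 2) - 3 * |x s| ^ 3) / 24
      - z s)
    (a := 0) (b := T) (M := 2 * B ^ 2 * (K:ℝ) + (K:ℝ))
    (by
      intro s hs t ht
      have e1 := aux_cube (hBy s hs) (hBy t ht) (hyd s hs t ht)
      have e2 := aux_sqmul (hBx s hs) (hBy s hs) (hBx t ht) (hxd s hs t ht) (hyd s hs t ht)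
      have e3 := aux_sqmul (hBy s hs) (hBw s hs) (hBy t ht) (hyd s hs t ht) (hwdiff s hs t ht)
      have e4 := aux_cube (hBw s hs) (hBw t ht) (hwdiff s hs t ht)
      have e5 := hzd s hs t ht
      have hnn : 0 ≤ B ^ 2 * ((K:ℝ) * |s - t|) := by positivity
      obtain ⟨f1, f2⟩ := abs_le.1 e1
      obtain ⟨f3, f4⟩ := abs_le.1 e2
      obtain ⟨f5, f6⟩ := abs_le.1 e3
      obtain ⟨f7, f8⟩ := abs_le.1 e4
      obtain ⟨f9, f10⟩ := abs_le.1 e5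
      beta_reduce; rw [abs_le]
      constructor <;> nlinarith [f1, f2, f3, f4, f5, f6, f7, f8, f9, f10, hnn])
    (by
      filter_upwards [hae', ae_restrict_of_ae (aux_acc x), ae_restrict_mem measurableSet_Ioo]
        with t ht hacc htIoo
      obtain ⟨hdx, hdy, hdz, hcon, hz⟩ := ht
      obtain ⟨wd, hdw, hrel, hwd⟩ := aux_w x t (deriv x t) hdx hacc
      have hyw : |x t| ≤ y t := hIx t (Ioo_subset_Icc_self htIoo)
      have hw0 : 0 ≤ |x t| := abs_nonneg _
      have hdywd : 0 ≤ deriv y t + wd := by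
        have := (abs_le.1 hwd).1
        have := (abs_le.1 hwd).2
        have h5 := le_abs_self (deriv x t)
        have h6 := neg_abs_le (deriv x t)
        linarith [hcon, abs_nonneg (deriv x t)]
      have hfac1 : 0 ≤ y t - |x t| := by linarith
      have hfac2 : 0 ≤ y t + 3 * |x t| := by linarith
      refine ⟨(deriv y t + wd) * (y t - |x t|) * (y t + 3 * |x t|) / 8,
        div_nonneg (mul_nonneg (mul_nonneg hdywd hfac1) hfac2) (by norm_num), ?_⟩
      have hcombo := (((hdy.pow 3).add (((hdx.pow 2).mul hdy).const_mul 3)).add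
        ((hdw.mul (hdy.pow 2)).const_mul 3)).sub ((hdw.pow 3).const_mul 3)
      have htot := (hcombo.div_const 24).sub hdz
      have hw2 : |x t| ^ 2 = x t ^ 2 := sq_abs (x t)
      have h9 : (deriv y t + wd) * (y t - |x t|) * (y t + 3 * |x t|) / 8 =
          (3 * y t ^ 2 * deriv y t
            + 3 * (2 * x t ^ 1 * deriv x t * y t + x t ^ 2 * deriv y t)
            + 3 * (wd * y t ^ 2 + |x t| * (2 * y t ^ 1 * deriv y t))
            - 3 * (3 * |x t| ^ 2 * wd)) / 24 - deriv z t := by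
        rw [hz]
        linear_combination (-(y t) / 4) * hrel + (-(3 * deriv y t) / 8) * hw2
      rw [h9]
      exact htot)
  intro t ht
  have k5 := m5 0 h0T t ht ht.1
  beta_reduce at k5
  simp only [B1, mem_setOf_eq]
  refine ⟨hIx t ht, hIz t ht, ?_⟩
  linarith

end AuxB1
end
end

section
/- A point q₁ ∈ ℝ³ belongs to B₁ if and only if there exist T ≥ 0 and a P1-admissible curve q : [0,T] → ℝ³ with q(0) = (0,0,0) and q(T) = q₁. In other words, the attainable set of the first flat sub-Lorentzian Martinet problem from the origin (the causal future of the origin) is exactly B₁. -/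
open MeasureTheory Set

open Filter Topology Asymptotics

section AuxLemmas

lemma lip_ftc_mono {a b : ℝ} (hab : a < b) {f g : ℝ → ℝ} {K : NNReal}
    (hf : LipschitzOnWith K f (Icc a b))
    (hae : ∀ᵐ t ∂(volume.restrict (Icc a b)), HasDerivAt f (g t) t ∧ 0 ≤ g t) :
    f a ≤ f b := by
  set μ := volume.restrict (Ioc a b) with hμ
  set h : ℕ → ℝ := fun n => (b - a) / (2 * (n + 1)) with hh
  have hba : 0 < b - a := sub_pos.2 hab
  have hpos : ∀ n, 0 < h n := fun n => by positivity
  have hle : ∀ n, h n ≤ (b - a) / 2 := by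
    intro n
    rw [hh]
    apply div_le_div_of_nonneg_left hba.le (by positivity)
    nlinarith [Nat.cast_nonneg (α := ℝ) n]
  have haapp : ∀ n, a + h n ≤ b - h n := by
    intro n
    have := hle n
    linarith
  have htend : Tendsto h atTop (𝓝 0) := by
    rw [hh]
    have : Tendsto (fun n : ℕ => (2 : ℝ) * (n + 1)) atTop atTop := by
      apply Tendsto.const_mul_atTop (by norm_num)
      exact tendsto_atTop_add_const_right _ 1 tendsto_natCast_atTop_atTop
    simpa using Tendsto.div_atTop tendsto_const_nhds this
  set G : ℕ → ℝ → ℝ := fun n t => (Iic (b - h n)).indicator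
    (fun t => (f (t + h n) - f t) / h n) t with hG
  have hcont : ContinuousOn f (Icc a b) := hf.continuousOn
  -- measurability
  have hmeas : ∀ n, AEStronglyMeasurable (G n) μ := by
    intro n
    rw [hG]
    rw [aestronglyMeasurable_indicator_iff measurableSet_Iic]
    have hres : μ.restrict (Iic (b - h n)) = volume.restrict (Ioc a (b - h n)) := by
      rw [hμ, Measure.restrict_restrict measurableSet_Iic]
      congr 1
      ext t
      simp only [mem_inter_iff, mem_Iic, mem_Ioc]
      constructor
      · rintro ⟨h1, h2, h3⟩; exact ⟨h2, h1⟩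
      · rintro ⟨h1, h2⟩; exact ⟨h2, h1, by linarith [hpos n]⟩
    rw [hres]
    have h1 : AEStronglyMeasurable f (volume.restrict (Ioc a (b - h n))) := by
      apply (hcont.aestronglyMeasurable measurableSet_Icc).mono_measure
      exact Measure.restrict_mono (Ioc_subset_Icc_self.trans
        (Icc_subset_Icc le_rfl (by linarith [hpos n]))) le_rfl
    have h2 : AEStronglyMeasurable (fun t => f (t + h n)) (volume.restrict (Ioc a (b - h n))) := by
      have hmp : MeasurePreserving (· + h n) (volume.restrict (Ioc a (b - h n)))
          (volume.restrict (Ioc (a + h n) b)) := by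
        have := (measurePreserving_add_right volume (h n)).restrict_preimage
          (measurableSet_Ioc (a := a + h n) (b := b))
        convert this using 2
        ext t
        simp only [mem_Ioc, mem_preimage]
        constructor <;> intro ht <;> constructor <;> linarith [ht.1, ht.2]
      have h3 : AEStronglyMeasurable f (volume.restrict (Ioc (a + h n) b)) := by
        apply (hcont.aestronglyMeasurable measurableSet_Icc).mono_measure
        exact Measure.restrict_mono (Ioc_subset_Icc_self.trans
          (Icc_subset_Icc (by linarith [hpos n]) le_rfl)) le_rfl
      exact h3.comp_measurePreserving hmp
    simp only [div_eq_mul_inv]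
    exact (h2.sub h1).mul_const _
  -- boundedness
  have hbound : ∀ n, ∀ᵐ t ∂μ, ‖G n t‖ ≤ (K : ℝ) := by
    intro n
    filter_upwards [ae_restrict_mem measurableSet_Ioc] with t ht
    by_cases hc : t ∈ Iic (b - h n)
    · rw [hG]
      simp only [indicator_of_mem hc]
      have h1 : t ∈ Icc a b := ⟨ht.1.le, ht.2⟩
      have h2 : t + h n ∈ Icc a b :=
        ⟨by linarith [ht.1.le, (hpos n).le], by linarith [mem_Iic.1 hc]⟩
      have hd := (lipschitzOnWith_iff_dist_le_mul.1 hf) _ h2 _ h1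
      rw [Real.dist_eq, Real.dist_eq] at hd
      have : |t + h n - t| = h n := by
        rw [add_sub_cancel_left, abs_of_pos (hpos n)]
      rw [this] at hd
      rw [Real.norm_eq_abs, abs_div, abs_of_pos (hpos n), div_le_iff₀ (hpos n)]
      exact hd
    · rw [hG]
      simp only [indicator_of_notMem hc, norm_zero]
      positivity
  haveI : IsFiniteMeasure μ := by
    constructor
    rw [hμ, Measure.restrict_apply_univ]
    exact measure_Ioc_lt_top
  have hbint : Integrable (fun _ => (K : ℝ)) μ := integrable_const _
  -- a.e. convergence
  have hae' : ∀ᵐ t ∂μ, HasDerivAt f (g t) t ∧ 0 ≤ g t :=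
    ae_restrict_of_ae_restrict_of_subset Ioc_subset_Icc_self hae
  have hb0 : ∀ᵐ t ∂μ, t ≠ b := by
    rw [hμ]
    apply ae_restrict_of_ae
    rw [ae_iff]
    have : {t : ℝ | ¬t ≠ b} = {b} := by ext t; simp [not_not]
    rw [this]
    exact measure_singleton b
  have hlim : ∀ᵐ t ∂μ, Tendsto (fun n => G n t) atTop (𝓝 (g t)) := by
    filter_upwards [hae', ae_restrict_mem measurableSet_Ioc, hb0] with t hder ht htb
    have htlt : t < b := lt_of_le_of_ne ht.2 htb
    have hev : ∀ᶠ n in atTop, h n < b - t := by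
      have := htend
      rw [tendsto_order] at this
      exact this.2 _ (by linarith)
    have hslope := hasDerivAt_iff_tendsto_slope.1 hder.1
    have hseq : Tendsto (fun n => t + h n) atTop (𝓝[≠] t) := by
      rw [tendsto_nhdsWithin_iff]
      constructor
      · simpa using tendsto_const_nhds.add htend
      · exact Eventually.of_forall fun n => by
          simp only [mem_compl_iff, mem_singleton_iff]
          intro hcontra
          nlinarith [hpos n, hcontra]
    apply (hslope.comp hseq).congr'
    filter_upwards [hev] with n hn
    have hmem : t ∈ Iic (b - h n) := by simp only [mem_Iic]; linarith
    rw [hG]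
    simp only [Function.comp_apply, indicator_of_mem hmem]
    rw [slope_def_field, add_sub_cancel_left]
  have hdct := tendsto_integral_of_dominated_convergence (fun _ => (K : ℝ))
    hmeas hbint hbound hlim
  -- interval integrability helper
  have hIIc : ∀ c d : ℝ, a ≤ c → c ≤ d → d ≤ b → IntervalIntegrable f volume c d := by
    intro c d h1 h2 h3
    apply ContinuousOn.intervalIntegrable
    rw [uIcc_of_le h2]
    exact hcont.mono (Icc_subset_Icc h1 h3)
  -- computing the integrals
  have hint : ∀ n, ∫ t, G n t ∂μ
      = (∫ t in (b - h n)..b, f t) / h n - (∫ t in a..(a + h n), f t) / h n := by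
    intro n
    have hab1 : a ≤ b - h n := by linarith [haapp n, hpos n]
    have hab2 : a + h n ≤ b - h n := haapp n
    have hseteq : Iic (b - h n) ∩ Ioc a b = Ioc a (b - h n) := by
      ext t
      simp only [mem_inter_iff, mem_Iic, mem_Ioc]
      constructor
      · rintro ⟨h1, h2, h3⟩; exact ⟨h2, h1⟩
      · rintro ⟨h1, h2⟩; exact ⟨h2, h1, by linarith [hpos n]⟩
    have e1 : ∫ t, G n t ∂μ = ∫ t in Ioc a (b - h n), (f (t + h n) - f t) / h n := by
      rw [hG, hμ, integral_indicator measurableSet_Iic,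
        Measure.restrict_restrict measurableSet_Iic, hseteq]
    have hshift : IntervalIntegrable (fun t => f (t + h n)) volume a (b - h n) := by
      apply ContinuousOn.intervalIntegrable
      rw [uIcc_of_le hab1]
      apply hcont.comp ((continuous_add_right (h n)).continuousOn)
      intro t htm
      simp only [mem_Icc] at htm ⊢
      exact ⟨by linarith [htm.1, (hpos n).le], by linarith [htm.2]⟩
    have e2 : ∫ t in Ioc a (b - h n), (f (t + h n) - f t) / h n
        = (∫ t in a..(b - h n), (f (t + h n) - f t)) / h n := by
      rw [intervalIntegral.integral_of_le hab1, ← integral_div]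
    have e3 : ∫ t in a..(b - h n), (f (t + h n) - f t)
        = (∫ t in (a + h n)..b, f t) - ∫ t in a..(b - h n), f t := by
      rw [intervalIntegral.integral_sub hshift (hIIc a (b - h n) le_rfl hab1 (by linarith [hpos n]))]
      congr 1
      have := intervalIntegral.integral_comp_add_right (a := a) (b := b - h n) (f := f) (h n)
      rw [this, sub_add_cancel]
    have e4 : (∫ t in (a + h n)..b, f t) - ∫ t in a..(b - h n), f t
        = (∫ t in (b - h n)..b, f t) - ∫ t in a..(a + h n), f t := by
      have s1 : (∫ t in (a + h n)..(b - h n), f t) + ∫ t in (b - h n)..b, f t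
          = ∫ t in (a + h n)..b, f t :=
        intervalIntegral.integral_add_adjacent_intervals
          (hIIc _ _ (by linarith [hpos n]) hab2 (by linarith [hpos n]))
          (hIIc _ _ hab1 (by linarith [hpos n]) le_rfl)
      have s2 : (∫ t in a..(a + h n), f t) + ∫ t in (a + h n)..(b - h n), f t
          = ∫ t in a..(b - h n), f t :=
        intervalIntegral.integral_add_adjacent_intervals
          (hIIc _ _ le_rfl (by linarith [hpos n]) (by linarith [hpos n, hab2]))
          (hIIc _ _ (by linarith [hpos n]) hab2 (by linarith [hpos n]))
      linarith
    rw [e1, e2, e3, e4, sub_div]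
  -- endpoint limits
  have hKh : Tendsto (fun n => (K : ℝ) * h n) atTop (𝓝 0) := by
    simpa using htend.const_mul (K : ℝ)
  have hA : Tendsto (fun n => (∫ t in (b - h n)..b, f t) / h n) atTop (𝓝 (f b)) := by
    have key : ∀ n, ‖(∫ t in (b - h n)..b, f t) / h n - f b‖ ≤ (K : ℝ) * h n := by
      intro n
      have hab1 : a ≤ b - h n := by linarith [haapp n, hpos n]
      have hsub : ∫ t in (b - h n)..b, (f t - f b)
          = (∫ t in (b - h n)..b, f t) - h n * f b := by
        rw [intervalIntegral.integral_sub (hIIc _ _ hab1 (by linarith [hpos n]) le_rfl)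
          intervalIntegrable_const, intervalIntegral.integral_const, smul_eq_mul]
        ring_nf
      have hb1 : ‖∫ t in (b - h n)..b, (f t - f b)‖ ≤ ((K : ℝ) * h n) * |b - (b - h n)| := by
        apply intervalIntegral.norm_integral_le_of_norm_le_const
        intro t htm
        rw [Set.uIoc_of_le (by linarith [hpos n] : b - h n ≤ b)] at htm
        have h1 : t ∈ Icc a b := ⟨by linarith [htm.1], htm.2⟩
        have hd := (lipschitzOnWith_iff_dist_le_mul.1 hf) _ h1 _ (right_mem_Icc.2 hab.le)
        rw [Real.dist_eq, Real.dist_eq] at hd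
        rw [Real.norm_eq_abs]
        calc |f t - f b| ≤ (K : ℝ) * |t - b| := hd
          _ ≤ (K : ℝ) * h n := by
              apply mul_le_mul_of_nonneg_left _ K.coe_nonneg
              rw [abs_le]
              constructor <;> [linarith [htm.1]; linarith [htm.2, hpos n]]
      have habs : |b - (b - h n)| = h n := by
        have he : b - (b - h n) = h n := by ring
        rw [he, abs_of_pos (hpos n)]
      rw [habs, Real.norm_eq_abs] at hb1
      have hre : (∫ t in (b - h n)..b, f t) / h n - f b
          = (∫ t in (b - h n)..b, (f t - f b)) / h n := by
        rw [hsub, sub_div, mul_div_cancel_left₀ _ (hpos n).ne']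
      rw [hre, Real.norm_eq_abs, abs_div, abs_of_pos (hpos n), div_le_iff₀ (hpos n)]
      exact hb1
    have h0 := squeeze_zero_norm key hKh
    have h1 := h0.add_const (f b)
    simpa using h1
  have hB : Tendsto (fun n => (∫ t in a..(a + h n), f t) / h n) atTop (𝓝 (f a)) := by
    have key : ∀ n, ‖(∫ t in a..(a + h n), f t) / h n - f a‖ ≤ (K : ℝ) * h n := by
      intro n
      have hab1 : a + h n ≤ b := by linarith [haapp n, hpos n]
      have hsub : ∫ t in a..(a + h n), (f t - f a)
          = (∫ t in a..(a + h n), f t) - h n * f a := by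
        rw [intervalIntegral.integral_sub (hIIc _ _ le_rfl (by linarith [hpos n]) hab1)
          intervalIntegrable_const, intervalIntegral.integral_const, smul_eq_mul]
        ring_nf
      have hb1 : ‖∫ t in a..(a + h n), (f t - f a)‖ ≤ ((K : ℝ) * h n) * |a + h n - a| := by
        apply intervalIntegral.norm_integral_le_of_norm_le_const
        intro t htm
        rw [Set.uIoc_of_le (by linarith [hpos n] : a ≤ a + h n)] at htm
        have h1 : t ∈ Icc a b := ⟨htm.1.le, by linarith [htm.2]⟩
        have hd := (lipschitzOnWith_iff_dist_le_mul.1 hf) _ h1 _ (left_mem_Icc.2 hab.le)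
        rw [Real.dist_eq, Real.dist_eq] at hd
        rw [Real.norm_eq_abs]
        calc |f t - f a| ≤ (K : ℝ) * |t - a| := hd
          _ ≤ (K : ℝ) * h n := by
              apply mul_le_mul_of_nonneg_left _ K.coe_nonneg
              rw [abs_le]
              constructor <;> [linarith [htm.1, hpos n]; linarith [htm.2]]
      have habs : |a + h n - a| = h n := by
        have he : a + h n - a = h n := by ring
        rw [he, abs_of_pos (hpos n)]
      rw [habs, Real.norm_eq_abs] at hb1
      have hre : (∫ t in a..(a + h n), f t) / h n - f a
          = (∫ t in a..(a + h n), (f t - f a)) / h n := by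
        rw [hsub, sub_div, mul_div_cancel_left₀ _ (hpos n).ne']
      rw [hre, Real.norm_eq_abs, abs_div, abs_of_pos (hpos n), div_le_iff₀ (hpos n)]
      exact hb1
    have h0 := squeeze_zero_norm key hKh
    have h1 := h0.add_const (f a)
    simpa using h1
  have hconv2 : Tendsto (fun n => ∫ t, G n t ∂μ) atTop (𝓝 (f b - f a)) := by
    simp_rw [hint]
    exact hA.sub hB
  have huniq : ∫ t, g t ∂μ = f b - f a := tendsto_nhds_unique hdct hconv2
  have hnn : 0 ≤ ∫ t, g t ∂μ := integral_nonneg_of_ae (hae'.mono fun t ht => ht.2)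
  linarith

lemma lip_mono {T : ℝ} {f g : ℝ → ℝ} {K : NNReal}
    (hf : LipschitzOnWith K f (Icc 0 T))
    (hae : ∀ᵐ t ∂(volume.restrict (Icc 0 T)), HasDerivAt f (g t) t ∧ 0 ≤ g t) :
    ∀ t ∈ Icc (0:ℝ) T, f 0 ≤ f t := by
  intro t ht
  rcases eq_or_lt_of_le ht.1 with h0 | h0
  · rw [← h0]
  · exact lip_ftc_mono h0 (hf.mono (Icc_subset_Icc le_rfl ht.2))
      (ae_restrict_of_ae_restrict_of_subset (Icc_subset_Icc le_rfl ht.2) hae)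

lemma countable_of_loc_isolated {S : Set ℝ}
    (h : ∀ t ∈ S, ∃ ε > 0, ∀ u ∈ S, u ≠ t → u ∉ Ioo (t - ε) (t + ε)) : S.Countable := by
  choose! ε hε h2 using h
  have hp : ∀ t ∈ S, ∃ r : ℚ, t - ε t < (r : ℝ) ∧ (r : ℝ) < t := by
    intro t ht
    exact exists_rat_btwn (by linarith [hε t ht])
  have hq : ∀ t ∈ S, ∃ r : ℚ, t < (r : ℝ) ∧ (r : ℝ) < t + ε t := by
    intro t ht
    exact exists_rat_btwn (by linarith [hε t ht])
  choose! p hp1 hp2 using hp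
  choose! q hq1 hq2 using hq
  apply countable_of_injective_of_countable_image
    (f := fun t => ((p t, q t) : ℚ × ℚ)) ?_ (Set.to_countable _)
  intro s hs t ht hst
  by_contra hne
  simp only [Prod.mk.injEq] at hst
  apply h2 t ht s hs hne
  constructor
  · calc t - ε t < (p t : ℝ) := hp1 t ht
      _ = (p s : ℝ) := by rw [hst.1]
      _ < s := hp2 s hs
  · calc s < (q s : ℝ) := hq1 s hs
      _ = (q t : ℝ) := by rw [hst.2]
      _ < t + ε t := hq2 t ht

-- derivative of |x ∘|
lemma hasDerivAt_abs_comp {x : ℝ → ℝ} {t d : ℝ} (hx : HasDerivAt x d t)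
    (hcond : x t ≠ 0 ∨ d = 0) :
    HasDerivAt (fun u => |x u|) (Real.sign (x t) * d) t := by
  rcases lt_trichotomy (x t) 0 with hneg | hzero | hpos
  · have hev : (fun u => |x u|) =ᶠ[𝓝 t] fun u => -x u := by
      have hmem : x ⁻¹' Iio 0 ∈ 𝓝 t := hx.continuousAt.preimage_mem_nhds (Iio_mem_nhds hneg)
      filter_upwards [hmem] with u hu
      exact abs_of_neg hu
    have h1 : Real.sign (x t) * d = -d := by rw [Real.sign_of_neg hneg]; ring
    rw [h1]
    exact hx.neg.congr_of_eventuallyEq hev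
  · have hd : d = 0 := by
      rcases hcond with hc | hc
      · exact absurd hzero hc
      · exact hc
    subst hd
    have hg : Real.sign (x t) * 0 = 0 := by ring
    rw [hg]
    rw [hasDerivAt_iff_isLittleO] at hx ⊢
    simp only [hzero, sub_zero, smul_zero, abs_zero] at hx ⊢
    have he : (fun u => |x u|) = fun u => ‖x u‖ := by
      funext u
      exact (Real.norm_eq_abs _).symm
    rw [he]
    exact isLittleO_norm_left.mpr hx
  · have hev : (fun u => |x u|) =ᶠ[𝓝 t] x := by
      have hmem : x ⁻¹' Ioi 0 ∈ 𝓝 t := hx.continuousAt.preimage_mem_nhds (Ioi_mem_nhds hpos)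
      filter_upwards [hmem] with u hu
      exact abs_of_pos hu
    have h1 : Real.sign (x t) * d = d := by rw [Real.sign_of_pos hpos]; ring
    rw [h1]
    exact hx.congr_of_eventuallyEq hev

lemma abs_sign_le (v : ℝ) : |Real.sign v| ≤ 1 := by
  rcases lt_trichotomy v 0 with h | h | h
  · rw [Real.sign_of_neg h]; norm_num
  · rw [h, Real.sign_zero]; norm_num
  · rw [Real.sign_of_pos h]; norm_num

lemma rabs_mul_sign (v : ℝ) : |v| * Real.sign v = v := by
  rcases lt_trichotomy v 0 with h | h | h
  · rw [Real.sign_of_neg h, abs_of_neg h]; ring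
  · rw [h, Real.sign_zero, abs_zero]; ring
  · rw [Real.sign_of_pos h, abs_of_pos h]; ring

lemma mul_diff_bound {pu pv qu qv P Q Dp Dq : ℝ} (h1 : |pu| ≤ P) (h2 : |pv| ≤ P)
    (h3 : |qu| ≤ Q) (h4 : |qv| ≤ Q) (h5 : |pu - pv| ≤ Dp) (h6 : |qu - qv| ≤ Dq) :
    |pu * qu - pv * qv| ≤ Dp * Q + P * Dq := by
  have e : pu * qu - pv * qv = (pu - pv) * qu + pv * (qu - qv) := by ring
  rw [e]
  calc |(pu - pv) * qu + pv * (qu - qv)| ≤ |(pu - pv) * qu| + |pv * (qu - qv)| := abs_add_le _ _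
    _ = |pu - pv| * |qu| + |pv| * |qu - qv| := by rw [abs_mul, abs_mul]
    _ ≤ Dp * Q + P * Dq := by
        have a1 := mul_le_mul h5 h3 (abs_nonneg qu) ((abs_nonneg _).trans h5)
        have a2 := mul_le_mul h2 h6 (abs_nonneg _) ((abs_nonneg _).trans h2)
        linarith

lemma abs_comb3 (A B C : ℝ) : |A / 24 + B / 8 - C| ≤ |A| / 24 + |B| / 8 + |C| := by
  have h1 := abs_sub (A / 24 + B / 8) C
  have h2 := abs_add_le (A / 24) (B / 8)
  have h3 : |A / 24| = |A| / 24 := by rw [abs_div]; norm_num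
  have h4 : |B / 8| = |B| / 8 := by rw [abs_div]; norm_num
  linarith

lemma abs_comb2 (A B : ℝ) : |A + 3 * B| ≤ |A| + 3 * |B| := by
  have h1 := abs_add_le A (3 * B)
  have h2 : |3 * B| = 3 * |B| := by rw [abs_mul]; norm_num
  linarith

lemma cube_diff_bound {c d M D : ℝ} (hc : |c| ≤ M) (hd : |d| ≤ M) (h : |c - d| ≤ D) :
    |c ^ 3 - d ^ 3| ≤ 3 * (M ^ 2 * D) := by
  have h3 : |c ^ 2| ≤ M ^ 2 := by
    rw [abs_of_nonneg (sq_nonneg c), ← sq_abs]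
    exact pow_le_pow_left₀ (abs_nonneg c) hc 2
  have h4 : |d ^ 2| ≤ M ^ 2 := by
    rw [abs_of_nonneg (sq_nonneg d), ← sq_abs]
    exact pow_le_pow_left₀ (abs_nonneg d) hd 2
  have h2 : |c ^ 2 - d ^ 2| ≤ D * M + M * D := by
    have e : c ^ 2 - d ^ 2 = c * c - d * d := by ring
    rw [e]
    exact mul_diff_bound hc hd hc hd h h
  have e : c ^ 3 - d ^ 3 = c ^ 2 * c - d ^ 2 * d := by ring
  rw [e]
  have := mul_diff_bound h3 h4 hc hd h2 h
  have e2 : (D * M + M * D) * M + M ^ 2 * D = 3 * (M ^ 2 * D) := by ring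
  linarith

end AuxLemmas

noncomputable section

set_option maxHeartbeats 1000000 in
lemma reach_subset_B1 {q₁ : ℝ × ℝ × ℝ} (h : P1Reaches q₁) : q₁ ∈ B1 := by
  obtain ⟨T, x, y, z, ⟨hT, ⟨K, hx, hy, hz⟩, hae⟩, x0, y0, z0, hend⟩ := h
  set Kr : ℝ := (K : ℝ) with hKr
  have hKr0 : 0 ≤ Kr := K.coe_nonneg
  set M : ℝ := Kr * T with hM
  have hM0 : 0 ≤ M := mul_nonneg hKr0 hT
  have hd : ∀ {f : ℝ → ℝ}, LipschitzOnWith K f (Icc 0 T) →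
      ∀ u ∈ Icc (0:ℝ) T, ∀ v ∈ Icc (0:ℝ) T, |f u - f v| ≤ Kr * |u - v| := by
    intro f hf u hu v hv
    have := (lipschitzOnWith_iff_dist_le_mul.1 hf) u hu v hv
    rwa [Real.dist_eq, Real.dist_eq] at this
  have hbnd : ∀ {f : ℝ → ℝ}, LipschitzOnWith K f (Icc 0 T) → f 0 = 0 →
      ∀ t ∈ Icc (0:ℝ) T, |f t| ≤ M := by
    intro f hf hf0 t ht
    have h1 := hd hf t ht 0 ⟨le_rfl, hT⟩
    rw [hf0, sub_zero, sub_zero, abs_of_nonneg ht.1] at h1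
    calc |f t| ≤ Kr * t := h1
      _ ≤ Kr * T := mul_le_mul_of_nonneg_left ht.2 hKr0
  have hxM := hbnd hx x0
  have hyM := hbnd hy y0
  have hzM := hbnd hz z0
  -- step 1 : |x| ≤ y pointwise
  have hae1 : ∀ᵐ t ∂(volume.restrict (Icc 0 T)),
      HasDerivAt (fun u => y u - x u) (deriv y t - deriv x t) t ∧
        0 ≤ deriv y t - deriv x t := by
    filter_upwards [hae] with t ht
    obtain ⟨hdx, hdy, _, hcon, _⟩ := ht
    exact ⟨hdy.sub hdx, by linarith [le_abs_self (deriv x t)]⟩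
  have hae2 : ∀ᵐ t ∂(volume.restrict (Icc 0 T)),
      HasDerivAt (fun u => y u + x u) (deriv y t + deriv x t) t ∧
        0 ≤ deriv y t + deriv x t := by
    filter_upwards [hae] with t ht
    obtain ⟨hdx, hdy, _, hcon, _⟩ := ht
    exact ⟨hdy.add hdx, by linarith [neg_abs_le (deriv x t)]⟩
  have hlip1 : LipschitzOnWith (Real.toNNReal (2 * Kr)) (fun t => y t - x t) (Icc 0 T) := by
    rw [lipschitzOnWith_iff_dist_le_mul]
    intro u hu v hv
    rw [Real.dist_eq, Real.dist_eq, Real.coe_toNNReal _ (by positivity)]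
    have h1 := hd hx u hu v hv
    have h2 := hd hy u hu v hv
    have e : y u - x u - (y v - x v) = (y u - y v) - (x u - x v) := by ring
    rw [e]
    calc |(y u - y v) - (x u - x v)| ≤ |y u - y v| + |x u - x v| := abs_sub _ _
      _ ≤ 2 * Kr * |u - v| := by linarith
  have hlip2 : LipschitzOnWith (Real.toNNReal (2 * Kr)) (fun t => y t + x t) (Icc 0 T) := by
    rw [lipschitzOnWith_iff_dist_le_mul]
    intro u hu v hv
    rw [Real.dist_eq, Real.dist_eq, Real.coe_toNNReal _ (by positivity)]
    have h1 := hd hx u hu v hv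
    have h2 := hd hy u hu v hv
    have e : y u + x u - (y v + x v) = (y u - y v) + (x u - x v) := by ring
    rw [e]
    calc |(y u - y v) + (x u - x v)| ≤ |y u - y v| + |x u - x v| := abs_add_le _ _
      _ ≤ 2 * Kr * |u - v| := by linarith
  have m1 := lip_mono hlip1 hae1
  have m2 := lip_mono hlip2 hae2
  have hyx : ∀ t ∈ Icc (0:ℝ) T, |x t| ≤ y t := by
    intro t ht
    have a1 := m1 t ht
    have a2 := m2 t ht
    rw [x0, y0] at a1 a2
    exact abs_le.2 ⟨by linarith, by linarith⟩
  -- the exceptional null set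
  set N : Set ℝ := {t : ℝ | x t = 0 ∧ HasDerivAt x (deriv x t) t ∧ deriv x t ≠ 0} with hN
  have hNc : N.Countable := by
    apply countable_of_loc_isolated
    rintro t ⟨hx0, hder, hd0⟩
    have hslope := hasDerivAt_iff_tendsto_slope.1 hder
    have hev : ∀ᶠ u in 𝓝[≠] t, slope x t u ≠ 0 := hslope.eventually_ne hd0
    obtain ⟨ε, hε, hsub⟩ := Metric.mem_nhdsWithin_iff.1 hev
    refine ⟨ε, hε, ?_⟩
    intro u hu hne hmem
    have h1 : u ∈ Metric.ball t ε ∩ {t}ᶜ := by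
      constructor
      · rw [Metric.mem_ball, Real.dist_eq]
        exact abs_lt.2 ⟨by linarith [hmem.1], by linarith [hmem.2]⟩
      · exact hne
    have h2 := hsub h1
    apply h2
    rw [slope_def_field, hu.1, hx0]
    simp
  have hNae : ∀ᵐ t ∂(volume.restrict (Icc 0 T)), t ∉ N := by
    apply ae_restrict_of_ae
    rw [ae_iff]
    have he : {t | ¬ t ∉ N} = N := by ext t; simp
    rw [he]
    exact hNc.measure_zero _
  -- step 2 : lower bound
  have hae3 : ∀ᵐ t ∂(volume.restrict (Icc 0 T)),
      HasDerivAt (fun t => z t - |x t| ^ 3 / 6) (deriv z t - |x t| ^ 2 * (Real.sign (x t) * deriv x t) / 2) t ∧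
        0 ≤ deriv z t - |x t| ^ 2 * (Real.sign (x t) * deriv x t) / 2 := by
    filter_upwards [hae, hNae] with t ht htN
    obtain ⟨hdx, hdy, hdz, hcon, hzz⟩ := ht
    have hcond : x t ≠ 0 ∨ deriv x t = 0 := by
      by_cases h0 : x t = 0
      · right; by_contra hne; exact htN ⟨h0, hdx, hne⟩
      · left; exact h0
    have habs := hasDerivAt_abs_comp hdx hcond
    have hcube := habs.pow 3
    have hD := hdz.sub (hcube.div_const 6)
    have he1 : Real.sign (x t) * deriv x t ≤ |deriv x t| := by
      calc Real.sign (x t) * deriv x t ≤ |Real.sign (x t) * deriv x t| := le_abs_self _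
        _ = |Real.sign (x t)| * |deriv x t| := abs_mul _ _
        _ ≤ 1 * |deriv x t| := mul_le_mul_of_nonneg_right (abs_sign_le _) (abs_nonneg _)
        _ = |deriv x t| := one_mul _
    constructor
    · refine hD.congr_deriv ?_
      push_cast
      ring
    · rw [hzz]
      have hb2 : |x t| ^ 2 = x t ^ 2 := sq_abs _
      rw [hb2]
      nlinarith [mul_nonneg (sq_nonneg (x t)) (sub_nonneg.2 (he1.trans hcon))]
  have hlip3 : LipschitzOnWith (Real.toNNReal (Kr * (1 + 3 * M ^ 2)))
      (fun t => z t - |x t| ^ 3 / 6) (Icc 0 T) := by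
    rw [lipschitzOnWith_iff_dist_le_mul]
    intro u hu v hv
    rw [Real.dist_eq, Real.dist_eq, Real.coe_toNNReal _ (by positivity)]
    have h1 := hd hx u hu v hv
    have h2 := hd hz u hu v hv
    have hcube : abs (|x u| ^ 3 - |x v| ^ 3) ≤ 3 * (M ^ 2 * (Kr * |u - v|)) := by
      apply cube_diff_bound
      · rw [abs_abs]; exact hxM u hu
      · rw [abs_abs]; exact hxM v hv
      · exact (abs_abs_sub_abs_le_abs_sub _ _).trans h1
    have e : (z u - |x u| ^ 3 / 6) - (z v - |x v| ^ 3 / 6)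
        = (z u - z v) - (|x u| ^ 3 - |x v| ^ 3) / 6 := by ring
    rw [e]
    have hd0 : 0 ≤ |u - v| := abs_nonneg _
    calc |(z u - z v) - (|x u| ^ 3 - |x v| ^ 3) / 6|
        ≤ |z u - z v| + |(|x u| ^ 3 - |x v| ^ 3) / 6| := abs_sub _ _
      _ = |z u - z v| + abs (|x u| ^ 3 - |x v| ^ 3) / 6 := by rw [abs_div]; norm_num
      _ ≤ Kr * (1 + 3 * M ^ 2) * |u - v| := by nlinarith [hcube, h2, mul_nonneg (mul_nonneg hKr0 hd0) (sq_nonneg M)]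
  have m3 := lip_mono hlip3 hae3 T ⟨hT, le_rfl⟩
  simp only [x0, z0, abs_zero] at m3
  have hlow : |x T| ^ 3 / 6 ≤ z T := by
    norm_num at m3
    linarith
  -- step 3 : upper bound
  have hae4 : ∀ᵐ t ∂(volume.restrict (Icc 0 T)),
      HasDerivAt (fun t => (y t ^ 3 + 3 * (x t ^ 2 * y t)) / 24
          + |x t| * (y t ^ 2 - x t ^ 2) / 8 - z t)
        ((y t + 3 * |x t|) * ((y t - |x t|) * (deriv y t + Real.sign (x t) * deriv x t)) / 8) t ∧
        0 ≤ (y t + 3 * |x t|) * ((y t - |x t|) * (deriv y t + Real.sign (x t) * deriv x t)) / 8 := by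
    filter_upwards [hae, hNae, ae_restrict_mem measurableSet_Icc] with t ht htN htI
    obtain ⟨hdx, hdy, hdz, hcon, hzz⟩ := ht
    have hcond : x t ≠ 0 ∨ deriv x t = 0 := by
      by_cases h0 : x t = 0
      · right; by_contra hne; exact htN ⟨h0, hdx, hne⟩
      · left; exact h0
    have habs := hasDerivAt_abs_comp hdx hcond
    have h1 := hdy.pow 3
    have h2 := (hdx.pow 2).mul hdy
    have h3 := (h1.add (h2.const_mul 3)).div_const 24
    have h4 := (habs.mul ((hdy.pow 2).sub (hdx.pow 2))).div_const 8
    have hD := (h3.add h4).sub hdz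
    constructor
    · refine hD.congr_deriv ?_
      rw [hzz]
      rcases lt_trichotomy (x t) 0 with hc | hc | hc
      · rw [Real.sign_of_neg hc, abs_of_neg hc]; push_cast [Pi.pow_apply, Pi.sub_apply]; ring
      · rw [hc, Real.sign_zero, abs_zero]; push_cast [Pi.pow_apply, Pi.sub_apply, hc]; ring
      · rw [Real.sign_of_pos hc, abs_of_pos hc]; push_cast [Pi.pow_apply, Pi.sub_apply]; ring
    · have hby := hyx t htI
      have hb0 : (0:ℝ) ≤ |x t| := abs_nonneg _
      have he1 : |Real.sign (x t) * deriv x t| ≤ deriv y t := by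
        calc |Real.sign (x t) * deriv x t| = |Real.sign (x t)| * |deriv x t| := abs_mul _ _
          _ ≤ 1 * |deriv x t| := mul_le_mul_of_nonneg_right (abs_sign_le _) (abs_nonneg _)
          _ = |deriv x t| := one_mul _
          _ ≤ deriv y t := hcon
      apply div_nonneg _ (by norm_num)
      apply mul_nonneg (by linarith)
      apply mul_nonneg (by linarith)
      linarith [neg_abs_le (Real.sign (x t) * deriv x t)]
  have hlip4 : LipschitzOnWith (Real.toNNReal (Kr * (1 + 2 * M ^ 2)))
      (fun t => (y t ^ 3 + 3 * (x t ^ 2 * y t)) / 24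
        + |x t| * (y t ^ 2 - x t ^ 2) / 8 - z t) (Icc 0 T) := by
    rw [lipschitzOnWith_iff_dist_le_mul]
    intro u hu v hv
    rw [Real.dist_eq, Real.dist_eq, Real.coe_toNNReal _ (by positivity)]
    have hxd := hd hx u hu v hv
    have hyd := hd hy u hu v hv
    have hzd := hd hz u hu v hv
    have hxu := hxM u hu
    have hxv := hxM v hv
    have hyu := hyM u hu
    have hyv := hyM v hv
    set dd : ℝ := |u - v| with hdd
    have hd0 : 0 ≤ dd := abs_nonneg _
    have hA : |y u ^ 3 - y v ^ 3| ≤ 3 * (M ^ 2 * (Kr * dd)) :=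
      cube_diff_bound hyu hyv hyd
    have hsq : ∀ w : ℝ, |w| ≤ M → |w ^ 2| ≤ M ^ 2 := by
      intro w hw
      rw [abs_of_nonneg (sq_nonneg w), ← sq_abs]
      exact pow_le_pow_left₀ (abs_nonneg w) hw 2
    have hx2d : |x u ^ 2 - x v ^ 2| ≤ Kr * dd * M + M * (Kr * dd) := by
      have e : x u ^ 2 - x v ^ 2 = x u * x u - x v * x v := by ring
      rw [e]
      exact mul_diff_bound hxu hxv hxu hxv hxd hxd
    have hB : |x u ^ 2 * y u - x v ^ 2 * y v| ≤
        (Kr * dd * M + M * (Kr * dd)) * M + M ^ 2 * (Kr * dd) :=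
      mul_diff_bound (hsq _ hxu) (hsq _ hxv) hyu hyv hx2d hyd
    have hy2d : |y u ^ 2 - y v ^ 2| ≤ Kr * dd * M + M * (Kr * dd) := by
      have e : y u ^ 2 - y v ^ 2 = y u * y u - y v * y v := by ring
      rw [e]
      exact mul_diff_bound hyu hyv hyu hyv hyd hyd
    have hq : |(y u ^ 2 - x u ^ 2) - (y v ^ 2 - x v ^ 2)| ≤
        2 * (Kr * dd * M + M * (Kr * dd)) := by
      have e : (y u ^ 2 - x u ^ 2) - (y v ^ 2 - x v ^ 2)
          = (y u ^ 2 - y v ^ 2) - (x u ^ 2 - x v ^ 2) := by ring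
      rw [e]
      calc |(y u ^ 2 - y v ^ 2) - (x u ^ 2 - x v ^ 2)|
          ≤ |y u ^ 2 - y v ^ 2| + |x u ^ 2 - x v ^ 2| := abs_sub _ _
        _ ≤ 2 * (Kr * dd * M + M * (Kr * dd)) := by linarith
    have hqb : ∀ w ∈ Icc (0:ℝ) T, |y w ^ 2 - x w ^ 2| ≤ 2 * M ^ 2 := by
      intro w hw
      calc |y w ^ 2 - x w ^ 2| ≤ |y w ^ 2| + |x w ^ 2| := abs_sub _ _
        _ ≤ 2 * M ^ 2 := by linarith [hsq _ (hyM w hw), hsq _ (hxM w hw)]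
    have hC : abs (|x u| * (y u ^ 2 - x u ^ 2) - |x v| * (y v ^ 2 - x v ^ 2)) ≤
        Kr * dd * (2 * M ^ 2) + M * (2 * (Kr * dd * M + M * (Kr * dd))) := by
      apply mul_diff_bound
      · rw [abs_abs]; exact hxu
      · rw [abs_abs]; exact hxv
      · exact hqb u hu
      · exact hqb v hv
      · exact (abs_abs_sub_abs_le_abs_sub _ _).trans hxd
      · exact hq
    have e : ((y u ^ 3 + 3 * (x u ^ 2 * y u)) / 24 + |x u| * (y u ^ 2 - x u ^ 2) / 8 - z u)
        - ((y v ^ 3 + 3 * (x v ^ 2 * y v)) / 24 + |x v| * (y v ^ 2 - x v ^ 2) / 8 - z v)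
        = ((y u ^ 3 - y v ^ 3) + 3 * (x u ^ 2 * y u - x v ^ 2 * y v)) / 24
        + (|x u| * (y u ^ 2 - x u ^ 2) - |x v| * (y v ^ 2 - x v ^ 2)) / 8 - (z u - z v) := by
      ring
    rw [e]
    calc |((y u ^ 3 - y v ^ 3) + 3 * (x u ^ 2 * y u - x v ^ 2 * y v)) / 24
        + (|x u| * (y u ^ 2 - x u ^ 2) - |x v| * (y v ^ 2 - x v ^ 2)) / 8 - (z u - z v)|
        ≤ |(y u ^ 3 - y v ^ 3) + 3 * (x u ^ 2 * y u - x v ^ 2 * y v)| / 24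
          + abs (|x u| * (y u ^ 2 - x u ^ 2) - |x v| * (y v ^ 2 - x v ^ 2)) / 8
          + |z u - z v| := abs_comb3 _ _ _
      _ ≤ Kr * (1 + 2 * M ^ 2) * dd := by
          have hcomb := abs_comb2 (y u ^ 3 - y v ^ 3) (x u ^ 2 * y u - x v ^ 2 * y v)
          have hmm : 0 ≤ M ^ 2 * (Kr * dd) :=
            mul_nonneg (sq_nonneg M) (mul_nonneg hKr0 hd0)
          nlinarith [hA, hB, hC, hzd, hcomb, hmm]
  have m4 := lip_mono hlip4 hae4 T ⟨hT, le_rfl⟩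
  simp only [x0, y0, z0, abs_zero] at m4
  norm_num at m4
  have hup : z T ≤ (y T ^ 3 + 3 * x T ^ 2 * y T + 3 * |x T| * y T ^ 2 - 3 * |x T| ^ 3) / 24 := by
    have hc3 : |x T| ^ 3 = x T ^ 2 * |x T| := by rw [pow_succ, sq_abs]
    nlinarith [m4]
  rw [← hend]
  exact ⟨hyx T ⟨hT, le_rfl⟩, hlow, hup⟩

set_option maxHeartbeats 1000000 in
lemma B1_subset_reach {q₁ : ℝ × ℝ × ℝ} (h : q₁ ∈ B1) : P1Reaches q₁ := by
  obtain ⟨x₁, y₁, z₁⟩ := q₁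
  obtain ⟨hxy, hz1, hz2⟩ := h
  simp only at hxy hz1 hz2
  set b : ℝ := |x₁| with hbdef
  have hb0 : 0 ≤ b := abs_nonneg _
  have hby : b ≤ y₁ := hxy
  have hy0 : 0 ≤ y₁ := le_trans hb0 hby
  set s : ℝ := if x₁ < 0 then -1 else 1 with hsdef
  have hs2 : s ^ 2 = 1 := by
    rw [hsdef]
    by_cases hc : x₁ < 0 <;> simp [hc]
  have hsabs : |s| = 1 := by
    rw [hsdef]
    by_cases hc : x₁ < 0 <;> simp [hc]
  have hsb : s * b = x₁ := by
    rw [hsdef, hbdef]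
    by_cases hc : x₁ < 0
    · simp [hc, abs_of_neg hc]
    · simp [hc, abs_of_nonneg (not_lt.1 hc)]
  set c : ℝ := (6 * z₁ + b ^ 3) / 2 with hcdef
  have hc0 : 0 ≤ c := by
    rw [hcdef]
    nlinarith [pow_nonneg hb0 3, hz1]
  set a : ℝ := c ^ (((3:ℕ):ℝ))⁻¹ with hadef
  have ha3 : a ^ 3 = c := by
    rw [hadef]
    exact Real.rpow_inv_natCast_pow hc0 (by norm_num)
  have ha0 : 0 ≤ a := by
    rw [hadef]
    exact Real.rpow_nonneg hc0 _
  have hba : b ≤ a := by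
    have h3 : b ^ 3 ≤ a ^ 3 := by
      rw [ha3, hcdef]
      nlinarith [hz1]
    exact (pow_le_pow_iff_left₀ hb0 ha0 (by norm_num)).1 h3
  have haM : 2 * a ≤ b + y₁ := by
    rw [← sq_abs x₁, ← hbdef] at hz2
    have h3 : a ^ 3 ≤ ((b + y₁) / 2) ^ 3 := by
      rw [ha3, hcdef]
      nlinarith [hz2]
    have := (pow_le_pow_iff_left₀ ha0 (by linarith : (0:ℝ) ≤ (b + y₁) / 2) (by norm_num : 3 ≠ 0)).1 h3
    linarith
  set t₁ : ℝ := y₁ + b - 2 * a with ht₁def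
  have ht₁0 : 0 ≤ t₁ := by rw [ht₁def]; linarith
  set t₂ : ℝ := t₁ + a with ht₂def
  have ht₂T : t₂ ≤ y₁ := by rw [ht₂def, ht₁def]; linarith
  have ht₂a : t₂ + a - y₁ = b := by rw [ht₂def, ht₁def]; ring
  set X : ℝ → ℝ := fun t => s * max 0 (min (t - t₁) (t₂ + a - t)) with hXdef
  set Y : ℝ → ℝ := fun t => t with hYdef
  set Z : ℝ → ℝ := fun t =>
    ((max 0 (min (t - t₁) a)) ^ 3 + a ^ 3 - (min (t₂ + a - t) a) ^ 3) / 6 with hZdef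
  -- Lipschitz estimates
  set KK : NNReal := Real.toNNReal (1 + a ^ 2) with hKKdef
  have hKco : ((KK : ℝ)) = 1 + a ^ 2 := by
    rw [hKKdef, Real.coe_toNNReal _ (by positivity)]
  have hlipX : LipschitzOnWith KK X (Icc 0 y₁) := by
    rw [lipschitzOnWith_iff_dist_le_mul]
    intro u _ v _
    rw [Real.dist_eq, Real.dist_eq, hKco]
    have h1 := abs_max_sub_max_le_max (0:ℝ) (min (u - t₁) (t₂ + a - u))
      0 (min (v - t₁) (t₂ + a - v))
    have h2 := abs_min_sub_min_le_max (u - t₁) (t₂ + a - u) (v - t₁) (t₂ + a - v)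
    rw [show u - t₁ - (v - t₁) = u - v by ring,
      show t₂ + a - u - (t₂ + a - v) = -(u - v) by ring, abs_neg, max_self] at h2
    have h1' : |max 0 (min (u - t₁) (t₂ + a - u)) - max 0 (min (v - t₁) (t₂ + a - v))| ≤
        |min (u - t₁) (t₂ + a - u) - min (v - t₁) (t₂ + a - v)| := by
      refine h1.trans (le_of_eq ?_)
      rw [sub_self, abs_zero]
      exact max_eq_right (abs_nonneg _)
    have h3 := h1'.trans h2
    rw [hXdef]
    simp only
    rw [← mul_sub, abs_mul, hsabs, one_mul]
    nlinarith [sq_nonneg a, abs_nonneg (u - v)]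
  have hlipY : LipschitzOnWith KK Y (Icc 0 y₁) := by
    rw [lipschitzOnWith_iff_dist_le_mul]
    intro u _ v _
    rw [hKco, hYdef]
    simp only
    nlinarith [sq_nonneg a, dist_nonneg (x := u) (y := v)]
  have hlipZ : LipschitzOnWith KK Z (Icc 0 y₁) := by
    rw [lipschitzOnWith_iff_dist_le_mul]
    intro u hu v hv
    rw [Real.dist_eq, Real.dist_eq, hKco]
    have hPl : |max 0 (min (u - t₁) a) - max 0 (min (v - t₁) a)| ≤ |u - v| := by
      have h1 := abs_max_sub_max_le_max (0:ℝ) (min (u - t₁) a) 0 (min (v - t₁) a)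
      have h2 := abs_min_sub_min_le_max (u - t₁) a (v - t₁) a
      rw [show u - t₁ - (v - t₁) = u - v by ring, sub_self, abs_zero,
        max_eq_left (abs_nonneg _)] at h2
      have h1' : |max 0 (min (u - t₁) a) - max 0 (min (v - t₁) a)| ≤
          |min (u - t₁) a - min (v - t₁) a| := by
        refine h1.trans (le_of_eq ?_)
        rw [sub_self, abs_zero]
        exact max_eq_right (abs_nonneg _)
      exact h1'.trans h2
    have hml : |min (t₂ + a - u) a - min (t₂ + a - v) a| ≤ |u - v| := by
      have h2 := abs_min_sub_min_le_max (t₂ + a - u) a (t₂ + a - v) a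
      rw [show t₂ + a - u - (t₂ + a - v) = -(u - v) by ring, abs_neg, sub_self, abs_zero,
        max_eq_left (abs_nonneg _)] at h2
      exact h2
    have hPb : ∀ w, |max 0 (min (w - t₁) a)| ≤ a := by
      intro w
      rw [abs_of_nonneg (le_max_left _ _)]
      exact max_le ha0 (min_le_right _ _)
    have hmb : ∀ w ∈ Icc (0:ℝ) y₁, |min (t₂ + a - w) a| ≤ a := by
      intro w hw
      rw [abs_of_nonneg (le_min (by linarith [hw.2, ht₂a, hb0]) ha0)]
      exact min_le_right _ _
    have hcu := cube_diff_bound (hPb u) (hPb v) hPl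
    have hcv := cube_diff_bound (hmb u hu) (hmb v hv) hml
    have e : Z u - Z v = ((max 0 (min (u - t₁) a)) ^ 3 - (max 0 (min (v - t₁) a)) ^ 3) / 6
        - ((min (t₂ + a - u) a) ^ 3 - (min (t₂ + a - v) a) ^ 3) / 6 := by
      rw [hZdef]; ring
    rw [e]
    have htri := abs_sub (((max 0 (min (u - t₁) a)) ^ 3 - (max 0 (min (v - t₁) a)) ^ 3) / 6)
      (((min (t₂ + a - u) a) ^ 3 - (min (t₂ + a - v) a) ^ 3) / 6)
    rw [abs_div, abs_div] at htri
    norm_num at htri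
    nlinarith [abs_nonneg (u - v), sq_nonneg a]
  -- initial values
  have hX0 : X 0 = 0 := by
    rw [hXdef]
    simp only
    rw [max_eq_left (le_trans (min_le_left _ _) (by linarith))]
    ring
  have hY0 : Y 0 = 0 := rfl
  have hZ0 : Z 0 = 0 := by
    rw [hZdef]
    simp only
    rw [max_eq_left (le_trans (min_le_left _ _) (by linarith)),
      min_eq_right (by rw [ht₂def]; linarith)]
    ring
  -- terminal values
  have hXT : X y₁ = x₁ := by
    rw [hXdef]
    simp only
    rw [show y₁ - t₁ = 2 * a - b by rw [ht₁def]; ring,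
      show t₂ + a - y₁ = b from ht₂a,
      min_eq_right (by linarith), max_eq_right hb0]
    exact hsb
  have hZT : Z y₁ = z₁ := by
    rw [hZdef]
    simp only
    rw [show y₁ - t₁ = 2 * a - b by rw [ht₁def]; ring,
      show t₂ + a - y₁ = b from ht₂a,
      min_eq_right (by linarith : a ≤ 2 * a - b), max_eq_right ha0,
      min_eq_left hba, ha3, hcdef]
    ring
  -- a.e. derivative conditions
  have haeF : ∀ᵐ t ∂(volume.restrict (Icc 0 y₁)),
      HasDerivAt X (deriv X t) t ∧ HasDerivAt Y (deriv Y t) t ∧ HasDerivAt Z (deriv Z t) t ∧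
      |deriv X t| ≤ deriv Y t ∧ deriv Z t = (X t) ^ 2 * deriv Y t / 2 := by
    have h1 : ∀ᵐ t ∂(volume.restrict (Icc 0 y₁)), t ∈ Icc (0:ℝ) y₁ :=
      ae_restrict_mem measurableSet_Icc
    have h2 : ∀ᵐ t ∂(volume.restrict (Icc 0 y₁)), t ∉ ({0, t₁, t₂, y₁} : Set ℝ) := by
      apply ae_restrict_of_ae
      rw [ae_iff]
      have he : {t : ℝ | ¬ t ∉ ({0, t₁, t₂, y₁} : Set ℝ)} = {0, t₁, t₂, y₁} := by
        ext t; simp only [mem_setOf_eq, not_not]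
      rw [he]
      exact Set.Finite.measure_zero (Set.toFinite _) _
    filter_upwards [h1, h2] with t htI htS
    simp only [mem_insert_iff, mem_singleton_iff, not_or] at htS
    obtain ⟨ht0, htt₁, htt₂, htT⟩ := htS
    have ht0' : 0 < t := lt_of_le_of_ne htI.1 (Ne.symm ht0)
    have htT' : t < y₁ := lt_of_le_of_ne htI.2 htT
    have hdY : HasDerivAt Y 1 t := hasDerivAt_id t
    have dY : deriv Y t = 1 := hdY.deriv
    rcases lt_trichotomy t t₁ with hc1 | hc1 | hc1
    · -- t < t₁ : everything flat
      have hXev : X =ᶠ[𝓝 t] fun _ => 0 := by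
        filter_upwards [Iio_mem_nhds hc1] with u hu
        rw [hXdef]
        simp only
        rw [max_eq_left (le_trans (min_le_left _ _) (by linarith [mem_Iio.1 hu]))]
        ring
      have hZev : Z =ᶠ[𝓝 t] fun _ => 0 := by
        filter_upwards [Iio_mem_nhds hc1] with u hu
        rw [hZdef]
        simp only
        rw [max_eq_left (le_trans (min_le_left _ _) (by linarith [mem_Iio.1 hu])),
          min_eq_right (by rw [ht₂def]; linarith [mem_Iio.1 hu])]
        ring
      have hdX : HasDerivAt X 0 t := (hasDerivAt_const t (0:ℝ)).congr_of_eventuallyEq hXev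
      have hdZ : HasDerivAt Z 0 t := (hasDerivAt_const t (0:ℝ)).congr_of_eventuallyEq hZev
      have dX : deriv X t = 0 := hdX.deriv
      have dZ : deriv Z t = 0 := hdZ.deriv
      have hXt : X t = 0 := hXev.eq_of_nhds
      refine ⟨by rw [dX]; exact hdX, by rw [dY]; exact hdY, by rw [dZ]; exact hdZ, ?_, ?_⟩
      · rw [dX, dY]; norm_num
      · rw [dZ, dY, hXt]; norm_num
    · exact absurd hc1 htt₁
    · rcases lt_trichotomy t t₂ with hc2 | hc2 | hc2
      · -- t₁ < t < t₂ : ascending diagonal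
        have hXev : X =ᶠ[𝓝 t] fun u => s * (u - t₁) := by
          filter_upwards [Ioo_mem_nhds hc1 hc2] with u hu
          rw [hXdef]
          simp only
          rw [min_eq_left (show u - t₁ ≤ t₂ + a - u by
              rw [ht₂def] at hu ⊢; linarith [hu.2]),
            max_eq_right (show (0:ℝ) ≤ u - t₁ by linarith [hu.1])]
        have hZev : Z =ᶠ[𝓝 t] fun u => (u - t₁) ^ 3 / 6 := by
          filter_upwards [Ioo_mem_nhds hc1 hc2] with u hu
          rw [hZdef]
          simp only
          rw [min_eq_left (show u - t₁ ≤ a by rw [ht₂def] at hu; linarith [hu.2]),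
            max_eq_right (show (0:ℝ) ≤ u - t₁ by linarith [hu.1]),
            min_eq_right (show a ≤ t₂ + a - u by rw [ht₂def] at hu ⊢; linarith [hu.2])]
          ring
        have hbX : HasDerivAt (fun u : ℝ => s * (u - t₁)) s t := by
          simpa using ((hasDerivAt_id t).sub_const t₁).const_mul s
        have hdX : HasDerivAt X s t := hbX.congr_of_eventuallyEq hXev
        have hbZ : HasDerivAt (fun u : ℝ => (u - t₁) ^ 3 / 6) ((t - t₁) ^ 2 / 2) t := by
          have := (((hasDerivAt_id t).sub_const t₁).pow 3).div_const 6
          refine this.congr_deriv ?_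
          push_cast
          simp only [id_eq]
          ring
        have hdZ : HasDerivAt Z ((t - t₁) ^ 2 / 2) t := hbZ.congr_of_eventuallyEq hZev
        have dX : deriv X t = s := hdX.deriv
        have dZ : deriv Z t = (t - t₁) ^ 2 / 2 := hdZ.deriv
        have hXt : X t = s * (t - t₁) := hXev.eq_of_nhds
        refine ⟨by rw [dX]; exact hdX, by rw [dY]; exact hdY, by rw [dZ]; exact hdZ, ?_, ?_⟩
        · rw [dX, dY, hsabs]
        · rw [dZ, dY, hXt, mul_pow, hs2]; ring
      · exact absurd hc2 htt₂
      · -- t₂ < t < y₁ : descending diagonal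
        have htlt : t < t₂ + a := by linarith [ht₂a, hb0]
        have hXev : X =ᶠ[𝓝 t] fun u => s * (t₂ + a - u) := by
          filter_upwards [Ioo_mem_nhds hc2 htlt] with u hu
          rw [hXdef]
          simp only
          rw [min_eq_right (show t₂ + a - u ≤ u - t₁ by
              rw [ht₂def] at hu ⊢; linarith [hu.1]),
            max_eq_right (show (0:ℝ) ≤ t₂ + a - u by linarith [hu.2])]
        have hZev : Z =ᶠ[𝓝 t] fun u => (a ^ 3 + a ^ 3 - (t₂ + a - u) ^ 3) / 6 := by
          filter_upwards [Ioo_mem_nhds hc2 htlt] with u hu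
          rw [hZdef]
          simp only
          rw [min_eq_right (show a ≤ u - t₁ by rw [ht₂def] at hu; linarith [hu.1]),
            max_eq_right ha0,
            min_eq_left (show t₂ + a - u ≤ a by linarith [hu.1])]
        have hbX : HasDerivAt (fun u : ℝ => s * (t₂ + a - u)) (-s) t := by
          simpa using ((hasDerivAt_id t).const_sub (t₂ + a)).const_mul s
        have hdX : HasDerivAt X (-s) t := hbX.congr_of_eventuallyEq hXev
        have hbZ : HasDerivAt (fun u : ℝ => (a ^ 3 + a ^ 3 - (t₂ + a - u) ^ 3) / 6)
            ((t₂ + a - t) ^ 2 / 2) t := by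
          have := ((((hasDerivAt_id t).const_sub (t₂ + a)).pow 3).const_sub
            (a ^ 3 + a ^ 3)).div_const 6
          refine this.congr_deriv ?_
          push_cast
          simp only [id_eq]
          ring
        have hdZ : HasDerivAt Z ((t₂ + a - t) ^ 2 / 2) t := hbZ.congr_of_eventuallyEq hZev
        have dX : deriv X t = -s := hdX.deriv
        have dZ : deriv Z t = (t₂ + a - t) ^ 2 / 2 := hdZ.deriv
        have hXt : X t = s * (t₂ + a - t) := hXev.eq_of_nhds
        refine ⟨by rw [dX]; exact hdX, by rw [dY]; exact hdY, by rw [dZ]; exact hdZ, ?_, ?_⟩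
        · rw [dX, dY, abs_neg, hsabs]
        · rw [dZ, dY, hXt, mul_pow, hs2]; ring
  exact ⟨y₁, X, Y, Z, ⟨hy0, ⟨KK, hlipX, hlipY, hlipZ⟩, haeF⟩, hX0, hY0, hZ0,
    by rw [hXT, hZT]⟩

/-- The attainable set of the first flat sub-Lorentzian Martinet problem from the
origin (the causal future of the origin) is exactly `B₁`. -/
theorem attainable_set_eq_B1 (q₁ : ℝ × ℝ × ℝ) : q₁ ∈ B1 ↔ P1Reaches q₁ := by
  constructor
  · exact fun h => B1_subset_reach h
  · exact fun h => reach_subset_B1 h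
end
end

section
/- Let q₁ = (x₁, y₁, z₁) with 0 < y₁, |x₁| ≤ y₁ and z₁ = (y₁³ + 3x₁²y₁ + 3|x₁|y₁² − 3|x₁|³)/24 (a point of the upper boundary surfaces S₁ ∪ S₂ of the attainable set). Then q₁ is reachable from the origin by a P1-admissible curve, but d(q₁) = 0: every P1-admissible curve from (0,0,0) to q₁ has sub-Lorentzian length 0. -/
open MeasureTheory Set

noncomputable section

section AuxLemmas

open Filter Topology

lemma ae_restrict_nmem_finite {μ : Measure ℝ} [NullSingletonClass μ] {s N : Set ℝ} (hN : N.Finite) :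
    ∀ᵐ t ∂(μ.restrict s), t ∉ N := by
  have h1 : μ.restrict s N = 0 :=
    le_antisymm ((Measure.restrict_apply_le s N).trans (hN.measure_zero μ).le) (zero_le)
  exact measure_eq_zero_iff_ae_notMem.1 h1


lemma myLip.mono_const {K K' : NNReal} {f : ℝ → ℝ} {s : Set ℝ}
    (hf : LipschitzOnWith K f s) (h : K ≤ K') : LipschitzOnWith K' f s := fun a ha b hb =>
  le_trans (hf ha hb) (mul_le_mul_left (by exact_mod_cast h) _)

lemma myLip.sub {K1 K2 : NNReal} {f g : ℝ → ℝ} {s : Set ℝ}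
    (hf : LipschitzOnWith K1 f s) (hg : LipschitzOnWith K2 g s) :
    LipschitzOnWith (K1 + K2) (fun t => f t - g t) s := by
  rw [lipschitzOnWith_iff_dist_le_mul] at *
  intro a ha b hb
  have h1 := hf a ha b hb
  have h2 := hg a ha b hb
  simp only [Real.dist_eq, NNReal.coe_add] at *
  calc |f a - g a - (f b - g b)| ≤ |f a - f b| + |g a - g b| := by
        rw [show f a - g a - (f b - g b) = (f a - f b) - (g a - g b) by ring]
        exact abs_sub _ _
    _ ≤ (K1 + K2) * |a - b| := by nlinarith [abs_nonneg (a - b)]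

lemma myLip.add {K1 K2 : NNReal} {f g : ℝ → ℝ} {s : Set ℝ}
    (hf : LipschitzOnWith K1 f s) (hg : LipschitzOnWith K2 g s) :
    LipschitzOnWith (K1 + K2) (fun t => f t + g t) s := by
  rw [lipschitzOnWith_iff_dist_le_mul] at *
  intro a ha b hb
  have h1 := hf a ha b hb
  have h2 := hg a ha b hb
  simp only [Real.dist_eq, NNReal.coe_add] at *
  calc |f a + g a - (f b + g b)| ≤ |f a - f b| + |g a - g b| := by
        rw [show f a + g a - (f b + g b) = (f a - f b) + (g a - g b) by ring]
        exact abs_add_le _ _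
    _ ≤ (K1 + K2) * |a - b| := by nlinarith [abs_nonneg (a - b)]

/-- Left slope comparison. -/
lemma slope_bound_left {x y : ℝ → ℝ} {t : ℝ} {dx dy : ℝ}
    (hx : HasDerivAt x dx t) (hy : HasDerivAt y dy t) (ht : 0 < t)
    (h : ∀ r ∈ Ico 0 t, y t - y r ≤ |x t - x r|) : dy ≤ |dx| := by
  have hmem : Ioo 0 t ∈ 𝓝[<] t := by
    rw [← Set.Ioi_inter_Iio]
    exact inter_mem (mem_nhdsWithin_of_mem_nhds (Ioi_mem_nhds ht)) self_mem_nhdsWithin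
  have hle : 𝓝[<] t ≤ 𝓝[≠] t := nhdsWithin_mono t (fun r hr => ne_of_lt hr)
  have hty : Tendsto (slope y t) (𝓝[<] t) (𝓝 dy) :=
    (hasDerivAt_iff_tendsto_slope.1 hy).mono_left hle
  have htx : Tendsto (fun r => |slope x t r|) (𝓝[<] t) (𝓝 |dx|) :=
    (continuous_abs.tendsto _).comp ((hasDerivAt_iff_tendsto_slope.1 hx).mono_left hle)
  refine le_of_tendsto_of_tendsto hty htx ?_
  filter_upwards [hmem] with r hr
  have hrt : r < t := hr.2
  have hkey := h r ⟨hr.1.le, hrt⟩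
  have hpos : 0 < t - r := by linarith
  have e1 : slope y t r = (y t - y r) / (t - r) := by
    rw [slope_def_field, div_eq_div_iff (sub_ne_zero.2 (ne_of_lt hrt)) (sub_ne_zero.2 (ne_of_gt hrt))]; ring
  have e2 : |slope x t r| = |x t - x r| / (t - r) := by
    rw [slope_def_field, show (x r - x t) / (r - t) = (x t - x r) / (t - r) by
      rw [div_eq_div_iff (sub_ne_zero.2 (ne_of_lt hrt)) (sub_ne_zero.2 (ne_of_gt hrt))]; ring,
      abs_div, abs_of_pos hpos, abs_sub_comm]
  rw [e1, e2]
  gcongr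


/-- Right slope comparison. -/
lemma slope_bound_right {x y : ℝ → ℝ} {t T dx dy : ℝ}
    (hx : HasDerivAt x dx t) (hy : HasDerivAt y dy t) (ht : t < T)
    (h : ∀ r ∈ Ioc t T, y r - y t ≤ |x r - x t|) : dy ≤ |dx| := by
  have hmem : Ioo t T ∈ 𝓝[>] t := by
    rw [← Set.Ioi_inter_Iio]
    exact inter_mem self_mem_nhdsWithin (mem_nhdsWithin_of_mem_nhds (Iio_mem_nhds ht))
  have hle : 𝓝[>] t ≤ 𝓝[≠] t := nhdsWithin_mono t (fun r hr => ne_of_gt hr)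
  have hty : Tendsto (slope y t) (𝓝[>] t) (𝓝 dy) :=
    (hasDerivAt_iff_tendsto_slope.1 hy).mono_left hle
  have htx : Tendsto (fun r => |slope x t r|) (𝓝[>] t) (𝓝 |dx|) :=
    (continuous_abs.tendsto _).comp ((hasDerivAt_iff_tendsto_slope.1 hx).mono_left hle)
  refine le_of_tendsto_of_tendsto hty htx ?_
  filter_upwards [hmem] with r hr
  have hrt : t < r := hr.1
  have hkey := h r ⟨hrt, hr.2.le⟩
  have hpos : 0 < r - t := by linarith
  have e2 : |slope x t r| = |x r - x t| / (r - t) := by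
    rw [slope_def_field, abs_div, abs_of_pos hpos]
  rw [slope_def_field, e2]
  gcongr

lemma phi_cont (c : ℝ) : Continuous (fun u : ℝ => (min u (c - u)) ^ 2 / 2) := by
  fun_prop

lemma phi_integral {c y₁ : ℝ} (h1 : c / 2 ≤ y₁) (h2 : y₁ ≤ c) :
    ∫ u in (0:ℝ)..y₁, (min u (c - u)) ^ 2 / 2 = (2 * (c / 2) ^ 3 - (c - y₁) ^ 3) / 6 := by
  have hc : 0 ≤ c := by linarith
  have hint : ∀ a b : ℝ, IntervalIntegrable (fun u : ℝ => (min u (c - u)) ^ 2 / 2) volume a b :=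
    fun a b => (phi_cont c).intervalIntegrable a b
  have hsplit := intervalIntegral.integral_add_adjacent_intervals (a := 0) (b := c/2) (c := y₁)
    (hint 0 (c/2)) (hint (c/2) y₁)
  have e1 : ∫ u in (0:ℝ)..(c/2), (min u (c - u)) ^ 2 / 2 = ∫ u in (0:ℝ)..(c/2), u ^ 2 / 2 := by
    apply intervalIntegral.integral_congr
    intro u hu
    rw [uIcc_of_le (by linarith)] at hu
    have : u ≤ c - u := by
      have := hu.2; have := hu.1; simp only [mem_Icc] at *; linarith [hu.2]
    simp only [min_eq_left this]
  have e2 : ∫ u in (c/2)..y₁, (min u (c - u)) ^ 2 / 2 = ∫ u in (c/2)..y₁, (c - u) ^ 2 / 2 := by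
    apply intervalIntegral.integral_congr
    intro u hu
    rw [uIcc_of_le h1] at hu
    have : c - u ≤ u := by linarith [hu.1]
    simp only [min_eq_right this]
  have v1 : ∫ u in (0:ℝ)..(c/2), u ^ 2 / 2 = (c/2)^3/6 := by
    rw [intervalIntegral.integral_div, integral_pow]
    ring
  have v2 : ∫ u in (c/2)..y₁, (c - u) ^ 2 / 2 = ((c/2)^3 - (c - y₁)^3)/6 := by
    rw [intervalIntegral.integral_comp_sub_left (fun u => u ^ 2 / 2) c,
      intervalIntegral.integral_div, integral_pow]
    ring_nf
  rw [e1, e2, v1, v2] at hsplit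
  rw [← hsplit]; ring

lemma monotoneOn_of_ae_deriv_nonneg {T : ℝ} {f : ℝ → ℝ} {K : NNReal}
    (hT : 0 ≤ T) (hf : LipschitzOnWith K f (Icc 0 T))
    (hae : ∀ᵐ t ∂(volume.restrict (Icc 0 T)), ∃ v, HasDerivAt f v t ∧ 0 ≤ v) :
    MonotoneOn f (Icc 0 T) := by
  rcases eq_or_lt_of_le hT with rfl | hT0
  · intro p hp q hq _
    rw [Icc_self, mem_singleton_iff] at hp hq
    rw [hp, hq]
  have hcont : ContinuousOn f (Icc 0 T) := hf.continuousOn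
  have hsub : ∀ u v : ℝ, u ∈ Icc 0 T → v ∈ Icc 0 T → uIcc u v ⊆ Icc 0 T := by
    intro u v hu hv
    rw [uIcc]
    exact Icc_subset_Icc (le_inf hu.1 hv.1) (sup_le hu.2 hv.2)
  have hInt : ∀ u v : ℝ, u ∈ Icc 0 T → v ∈ Icc 0 T → IntervalIntegrable f volume u v :=
    fun u v hu hv => (hcont.mono (hsub u v hu hv)).intervalIntegrable
  have claim : ∀ a b : ℝ, 0 ≤ a → a ≤ b → b < T → f a ≤ f b := by
    intro a b ha0 hab hbT
    set h : ℕ → ℝ := fun n => (T - b) / (n + 1) with hh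
    have hhpos : ∀ n, 0 < h n := fun n => div_pos (by linarith) (by positivity)
    have hhle : ∀ n, h n ≤ T - b := by
      intro n
      rw [hh]
      apply div_le_self (by linarith)
      have : (0:ℝ) ≤ (n:ℝ) := Nat.cast_nonneg n
      linarith
    have hh0 : Tendsto h atTop (𝓝 0) := by
      have := tendsto_const_div_atTop_nhds_zero_nat (T - b)
      have h2 : Tendsto (fun n : ℕ => (T - b) / ((n + 1 : ℕ) : ℝ)) atTop (𝓝 0) :=
        this.comp (tendsto_add_atTop_nat 1)
      refine h2.congr fun n => ?_
      rw [hh]; push_cast; ring_nf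
    -- membership facts
    have hmem : ∀ n, ∀ t : ℝ, a ≤ t → t ≤ b → t ∈ Icc 0 T ∧ t + h n ∈ Icc 0 T := by
      intro n t hat htb
      refine ⟨⟨by linarith, by linarith⟩, ⟨by linarith [(hhpos n).le], by linarith [hhle n]⟩⟩
    set F : ℕ → ℝ → ℝ := fun n t => (f (t + h n) - f t) / h n with hF
    -- computation of ∫ F n
    have hFint : ∀ n, ∫ t in a..b, F n t
        = ((∫ t in b..(b + h n), f t) - ∫ t in a..(a + h n), f t) / h n := by
      intro n
      have hmA : a ∈ Icc 0 T := ⟨ha0, by linarith⟩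
      have hmB : b ∈ Icc 0 T := ⟨by linarith, hbT.le⟩
      have hmA' : a + h n ∈ Icc 0 T := (hmem n a le_rfl hab).2
      have hmB' : b + h n ∈ Icc 0 T := (hmem n b hab le_rfl).2
      have hfa : IntervalIntegrable f volume a b := hInt a b hmA hmB
      have h1 : IntervalIntegrable (fun t => f (t + h n)) volume a b := by
        have h2 := (hInt (a + h n) (b + h n) hmA' hmB').comp_add_right (h n)
        simpa using h2
      rw [hF]
      rw [intervalIntegral.integral_div, intervalIntegral.integral_sub h1 hfa,
        intervalIntegral.integral_comp_add_right]
      have hadd1 := intervalIntegral.integral_add_adjacent_intervals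
        (hInt a (a + h n) hmA hmA') (hInt (a + h n) (b + h n) hmA' hmB')
      have hadd2 := intervalIntegral.integral_add_adjacent_intervals
        (hInt a b hmA hmB) (hInt b (b + h n) hmB hmB')
      congr 1
      linarith
    -- slope limits at endpoints
    have hslope : ∀ u : ℝ, 0 ≤ u → u < T →
        Tendsto (fun n => (∫ t in u..(u + h n), f t) / h n) atTop (𝓝 (f u)) := by
      intro u hu huT
      have hmemIcc : Icc 0 T ∈ 𝓝[Ioi u] u := by
        have hss : Ioi u ∩ Iio T ⊆ Icc 0 T := fun r hr => ⟨le_trans hu hr.1.le, hr.2.le⟩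
        exact mem_of_superset
          (inter_mem self_mem_nhdsWithin (mem_nhdsWithin_of_mem_nhds (Iio_mem_nhds huT))) hss
      have hmeas : StronglyMeasurableAtFilter f (𝓝[Ioi u] u) volume :=
        ⟨Icc 0 T, hmemIcc, hcont.aestronglyMeasurable measurableSet_Icc⟩
      have hcw : ContinuousWithinAt f (Ioi u) u :=
        (hcont u ⟨hu, huT.le⟩).mono_of_mem_nhdsWithin hmemIcc
      have hIb : HasDerivWithinAt (fun w => ∫ t in u..w, f t) (f u) (Ici u) u :=
        intervalIntegral.integral_hasDerivWithinAt_right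
          (hInt u u ⟨hu, huT.le⟩ ⟨hu, huT.le⟩) hmeas hcw
      have h1 := hasDerivWithinAt_iff_tendsto_slope.1 hIb
      have hseq : Tendsto (fun n => u + h n) atTop (𝓝[Ici u \ {u}] u) := by
        rw [tendsto_nhdsWithin_iff]
        constructor
        · simpa using tendsto_const_nhds.add hh0
        · exact Eventually.of_forall fun n =>
            ⟨by simp [(hhpos n).le], by simp [ne_of_gt (hhpos n)]⟩
      refine (h1.comp hseq).congr fun n => ?_
      rw [Function.comp_apply, slope_def_field, intervalIntegral.integral_same]
      rw [add_sub_cancel_left, sub_zero]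
    have key2 : Tendsto (fun n => ∫ t in a..b, F n t) atTop (𝓝 (f b - f a)) := by
      have := (hslope b (by linarith) hbT).sub (hslope a ha0 (lt_of_le_of_lt hab hbT))
      refine this.congr fun n => ?_
      rw [hFint n, sub_div]
    have key1 : Tendsto (fun n => ∫ t in a..b, F n t) atTop
        (𝓝 (∫ t in Ioc a b, deriv f t)) := by
      have hEq : ∀ n, ∫ t in a..b, F n t = ∫ t in Ioc a b, F n t :=
        fun n => intervalIntegral.integral_of_le hab
      rw [funext hEq]
      apply tendsto_integral_of_dominated_convergence (fun _ => (K : ℝ))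
      · intro n
        apply ContinuousOn.aestronglyMeasurable ?_ measurableSet_Ioc
        apply ContinuousOn.div_const
        apply ContinuousOn.sub
        · refine ContinuousOn.comp hcont ((continuous_add_right (h n)).continuousOn) ?_
          intro t ht
          exact (hmem n t ht.1.le ht.2).2
        · exact hcont.mono fun t ht => (hmem n t ht.1.le ht.2).1
      · exact integrable_const _
      · intro n
        filter_upwards [ae_restrict_mem measurableSet_Ioc] with t ht
        have h1 := (hmem n t ht.1.le ht.2).1
        have h2 := (hmem n t ht.1.le ht.2).2
        have hd := lipschitzOnWith_iff_dist_le_mul.1 hf (t + h n) h2 t h1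
        rw [Real.dist_eq, Real.dist_eq] at hd
        rw [Real.norm_eq_abs, hF]
        rw [abs_div, abs_of_pos (hhpos n)]
        rw [div_le_iff₀ (hhpos n)]
        calc |f (t + h n) - f t| ≤ K * |t + h n - t| := hd
          _ = K * h n := by rw [add_sub_cancel_left, abs_of_pos (hhpos n)]
      · have hsub2 : Ioc a b ⊆ Icc 0 T := fun t ht => ⟨by linarith [ht.1], by linarith [ht.2]⟩
        filter_upwards [ae_restrict_of_ae_restrict_of_subset hsub2 hae] with t ht
        obtain ⟨v, hv, _⟩ := ht
        rw [hv.deriv]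
        have h1 := hasDerivAt_iff_tendsto_slope.1 hv
        have hseq : Tendsto (fun n => t + h n) atTop (𝓝[≠] t) := by
          rw [tendsto_nhdsWithin_iff]
          constructor
          · simpa using tendsto_const_nhds.add hh0
          · exact Eventually.of_forall fun n => by simp [ne_of_gt (hhpos n)]
        refine (h1.comp hseq).congr fun n => ?_
        rw [Function.comp_apply, slope_def_field, add_sub_cancel_left]
    have huniq := tendsto_nhds_unique key2 key1
    have hnn : 0 ≤ ∫ t in Ioc a b, deriv f t := by
      apply integral_nonneg_of_ae
      have hsub2 : Ioc a b ⊆ Icc 0 T := fun t ht => ⟨by linarith [ht.1], by linarith [ht.2]⟩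
      filter_upwards [ae_restrict_of_ae_restrict_of_subset hsub2 hae] with t ht
      obtain ⟨v, hv, hv0⟩ := ht
      rw [hv.deriv]; exact hv0
    linarith [huniq, hnn]
  -- extend to the right endpoint
  intro u hu v hv huv
  rcases lt_or_eq_of_le hv.2 with hvT | hvT
  · exact claim u v hu.1 huv hvT
  · subst hvT
    rcases eq_or_lt_of_le huv with rfl | huv'
    · exact le_rfl
    · have hcw : ContinuousWithinAt f (Ico u v) v :=
        (hcont v hv).mono (fun r hr => ⟨by linarith [hu.1, hr.1], hr.2.le⟩)
      have hne : (𝓝[Ico u v] v).NeBot := right_nhdsWithin_Ico_neBot huv'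
      refine ge_of_tendsto hcw ?_
      filter_upwards [self_mem_nhdsWithin] with r hr
      exact claim u r hu.1 hr.1 hr.2
end AuxLemmas


section MainProof

open Filter Topology

set_option maxHeartbeats 1000000 in
/-- The key rigidity lemma: any admissible curve reaching the upper boundary point
has `|x'| = y'` almost everywhere, hence zero length. -/
lemma P1Length_eq_zero_of_reaches_boundary {x₁ y₁ z₁ : ℝ} (hy : 0 < y₁) (hx : |x₁| ≤ y₁)
    (hz₁ : z₁ = (2 * ((|x₁| + y₁) / 2) ^ 3 - |x₁| ^ 3) / 6)
    (T : ℝ) (x y z : ℝ → ℝ) (hadm : P1Admissible T x y z)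
    (hx0 : x 0 = 0) (hy0 : y 0 = 0) (hz0 : z 0 = 0)
    (hend : (x T, y T, z T) = (x₁, y₁, z₁)) :
    P1Length T x y = 0 := by
  obtain ⟨hT, ⟨K, hKx, hKy, hKz⟩, hae⟩ := hadm
  simp only [Prod.mk.injEq] at hend
  obtain ⟨hxT, hyT, hzT⟩ := hend
  set c : ℝ := |x₁| + y₁ with hc
  have ha0 : 0 ≤ |x₁| := abs_nonneg x₁
  have hc2 : c / 2 ≤ y₁ := by rw [hc]; linarith
  have hcy : y₁ ≤ c := by rw [hc]; linarith
  have hc0 : 0 ≤ c := by linarith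
  have hca : c - y₁ = |x₁| := by rw [hc]; ring
  -- monotonicity of y, y - x, y + x
  have hymono : MonotoneOn y (Icc 0 T) := by
    apply monotoneOn_of_ae_deriv_nonneg hT hKy
    filter_upwards [hae] with t ht
    exact ⟨deriv y t, ht.2.1, le_trans (abs_nonneg _) ht.2.2.2.1⟩
  have hpmono : MonotoneOn (fun t => y t - x t) (Icc 0 T) := by
    apply monotoneOn_of_ae_deriv_nonneg hT (myLip.sub hKy hKx)
    filter_upwards [hae] with t ht
    refine ⟨deriv y t - deriv x t, ht.2.1.sub ht.1, ?_⟩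
    have h1 := ht.2.2.2.1
    have h2 := le_abs_self (deriv x t)
    linarith
  have hmmono : MonotoneOn (fun t => y t + x t) (Icc 0 T) := by
    apply monotoneOn_of_ae_deriv_nonneg hT (myLip.add hKy hKx)
    filter_upwards [hae] with t ht
    refine ⟨deriv y t + deriv x t, ht.2.1.add ht.1, ?_⟩
    have h1 := ht.2.2.2.1
    have h2 := neg_abs_le (deriv x t)
    linarith
  have key : ∀ r ∈ Icc 0 T, ∀ t ∈ Icc 0 T, r ≤ t → |x t - x r| ≤ y t - y r := by
    intro r hr t ht hrt
    have h1 := hpmono hr ht hrt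
    have h2 := hmmono hr ht hrt
    simp only at h1 h2
    rw [abs_le]
    constructor <;> linarith
  have hT0 : 0 < T := by
    rcases eq_or_lt_of_le hT with rfl | h
    · rw [← hyT, hy0] at hy; exact absurd hy (lt_irrefl 0)
    · exact h
  have h0mem : (0:ℝ) ∈ Icc 0 T := ⟨le_rfl, hT⟩
  have hTmem : T ∈ Icc 0 T := ⟨hT, le_rfl⟩
  have hbound : ∀ r ∈ Icc 0 T, |x r| ≤ y r ∧ |x r| ≤ c - y r := by
    intro r hr
    constructor
    · have h1 := key 0 h0mem r hr hr.1
      rw [hx0, hy0] at h1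
      simpa using h1
    · have h1 := key r hr T hTmem hr.2
      rw [hxT, hyT] at h1
      have h2 : |x r| - |x₁| ≤ |x r - x₁| := abs_sub_abs_le_abs_sub _ _
      have h3 : |x r - x₁| = |x₁ - x r| := abs_sub_comm _ _
      rw [hc]
      linarith
  have hyb : ∀ r ∈ Icc 0 T, 0 ≤ y r ∧ y r ≤ y₁ := by
    intro r hr
    constructor
    · have := hymono h0mem hr hr.1; rw [hy0] at this; exact this
    · have := hymono hr hTmem hr.2; rw [hyT] at this; exact this
  -- the comparison function Φ
  set Φ : ℝ → ℝ := fun v => ∫ u in (0:ℝ)..v, (min u (c - u)) ^ 2 / 2 with hΦ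
  have hΦd : ∀ v, HasDerivAt Φ ((min v (c - v)) ^ 2 / 2) v := fun v =>
    ((phi_cont c).integral_hasStrictDerivAt 0 v).hasDerivAt
  have hΦlip : LipschitzOnWith (c ^ 2 / 2).toNNReal Φ (Icc 0 y₁) := by
    apply Convex.lipschitzOnWith_of_nnnorm_hasDerivWithin_le (convex_Icc 0 y₁)
      (f' := fun v => (min v (c - v)) ^ 2 / 2) (fun v hv => (hΦd v).hasDerivWithinAt)
    intro v hv
    have hm0 : 0 ≤ min v (c - v) := le_min hv.1 (by linarith [hv.2])
    have hmc : min v (c - v) ≤ c := le_trans (min_le_left _ _) (le_trans hv.2 hcy)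
    have h1 : (min v (c - v)) ^ 2 / 2 ≤ c ^ 2 / 2 := by nlinarith
    rw [← NNReal.coe_le_coe, Real.coe_toNNReal _ (by positivity), coe_nnnorm,
      Real.norm_eq_abs, abs_of_nonneg (by positivity)]
    exact h1
  have hmaps : MapsTo y (Icc 0 T) (Icc 0 y₁) := fun r hr => ⟨(hyb r hr).1, (hyb r hr).2⟩
  have hΦylip : LipschitzOnWith ((c ^ 2 / 2).toNNReal * K) (fun t => Φ (y t)) (Icc 0 T) :=
    hΦlip.comp hKy hmaps
  set G : ℝ → ℝ := fun t => Φ (y t) - z t with hG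
  have hGlip : LipschitzOnWith ((c ^ 2 / 2).toNNReal * K + K) G (Icc 0 T) :=
    myLip.sub hΦylip hKz
  have hGd : ∀ t, HasDerivAt y (deriv y t) t → HasDerivAt z (deriv z t) t →
      HasDerivAt G ((min (y t) (c - y t)) ^ 2 / 2 * deriv y t - deriv z t) t := by
    intro t hdy hdz
    exact (HasDerivAt.comp t (hΦd (y t)) hdy).sub hdz
  have hGmono : MonotoneOn G (Icc 0 T) := by
    apply monotoneOn_of_ae_deriv_nonneg hT hGlip
    filter_upwards [hae, ae_restrict_mem measurableSet_Icc] with t ht htmem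
    obtain ⟨hdx, hdy, hdz, hxy, hzeq⟩ := ht
    refine ⟨_, hGd t hdy hdz, ?_⟩
    rw [hzeq]
    have hb := hbound t htmem
    have hyb' := hyb t htmem
    have hm0 : 0 ≤ min (y t) (c - y t) := le_min hyb'.1 (by linarith [hyb'.2])
    have hxm : |x t| ≤ min (y t) (c - y t) := le_min hb.1 hb.2
    have hsq : x t ^ 2 ≤ (min (y t) (c - y t)) ^ 2 := by
      nlinarith [abs_nonneg (x t), sq_abs (x t)]
    have hy'0 : 0 ≤ deriv y t := le_trans (abs_nonneg _) hxy
    nlinarith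
  have hG0 : G 0 = 0 := by
    rw [hG]
    simp only [hy0, hz0, hΦ, intervalIntegral.integral_same, sub_zero]
  have hGT : G T = 0 := by
    rw [hG]
    simp only [hyT, hzT, hΦ]
    rw [phi_integral hc2 hcy, hca, hz₁]
    ring
  have hGconst : ∀ t ∈ Icc 0 T, G t = 0 := by
    intro t ht
    have h1 := hGmono ht hTmem ht.2
    have h2 := hGmono h0mem ht ht.1
    rw [hG0] at h2; rw [hGT] at h1
    linarith
  -- conclude |x'| = y' a.e.
  have main_ae : ∀ᵐ t ∂(volume.restrict (Icc 0 T)),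
      Real.sqrt ((deriv y t) ^ 2 - (deriv x t) ^ 2) = 0 := by
    have hIoo : ∀ᵐ t ∂(volume.restrict (Icc 0 T)), t ∈ Ioo 0 T := by
      filter_upwards [ae_restrict_mem measurableSet_Icc,
        ae_restrict_nmem_finite (μ := volume) (s := Icc 0 T)
          (N := {0, T}) ((Set.finite_singleton T).insert 0)] with t ht htn
      simp only [mem_insert_iff, mem_singleton_iff, not_or] at htn
      exact ⟨lt_of_le_of_ne ht.1 (Ne.symm htn.1), lt_of_le_of_ne ht.2 htn.2⟩
    filter_upwards [hae, hIoo] with t ht htIoo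
    obtain ⟨hdx, hdy, hdz, hxy, hzeq⟩ := ht
    have htmem : t ∈ Icc 0 T := ⟨htIoo.1.le, htIoo.2.le⟩
    have hGdt := hGd t hdy hdz
    have hEq : G =ᶠ[𝓝 t] (fun _ => 0) := by
      filter_upwards [Icc_mem_nhds htIoo.1 htIoo.2] with r hr
      exact hGconst r hr
    have hG0' : HasDerivAt (fun _ : ℝ => (0:ℝ))
        ((min (y t) (c - y t)) ^ 2 / 2 * deriv y t - deriv z t) t :=
      hEq.hasDerivAt_iff.1 hGdt
    have hval : (min (y t) (c - y t)) ^ 2 / 2 * deriv y t - deriv z t = 0 :=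
      hG0'.unique (hasDerivAt_const t 0)
    rw [hzeq] at hval
    have hy'0 : 0 ≤ deriv y t := le_trans (abs_nonneg _) hxy
    have hfin : deriv y t ≤ |deriv x t| := by
      rcases eq_or_lt_of_le hy'0 with h0 | hpos
      · rw [← h0]; exact abs_nonneg _
      · have hb := hbound t htmem
        have hyb' := hyb t htmem
        have hm0 : 0 ≤ min (y t) (c - y t) := le_min hyb'.1 (by linarith [hyb'.2])
        have hxm : |x t| ≤ min (y t) (c - y t) := le_min hb.1 hb.2
        have hsq : (min (y t) (c - y t)) ^ 2 = x t ^ 2 := by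
          have h5 : ((min (y t) (c - y t)) ^ 2 - x t ^ 2) * deriv y t = 0 := by linarith
          rcases mul_eq_zero.1 h5 with h6 | h6
          · linarith
          · exact absurd h6 (ne_of_gt hpos)
        have hxe : |x t| = min (y t) (c - y t) := by
          refine le_antisymm hxm ?_
          nlinarith [sq_abs (x t), abs_nonneg (x t)]
        rcases le_total (y t) (c - y t) with hcase | hcase
        · rw [min_eq_left hcase] at hxe
          apply slope_bound_left hdx hdy htIoo.1
          intro r hr
          have hrmem : r ∈ Icc 0 T := ⟨hr.1, le_trans hr.2.le htmem.2⟩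
          have h1 := (hbound r hrmem).1
          have h2 : |x t| - |x r| ≤ |x t - x r| := abs_sub_abs_le_abs_sub _ _
          linarith
        · rw [min_eq_right hcase] at hxe
          apply slope_bound_right hdx hdy htIoo.2
          intro r hr
          have hrmem : r ∈ Icc 0 T := ⟨le_trans htmem.1 hr.1.le, hr.2⟩
          have h1 := (hbound r hrmem).2
          have h2 : |x t| - |x r| ≤ |x t - x r| := abs_sub_abs_le_abs_sub _ _
          have h3 : |x t - x r| = |x r - x t| := abs_sub_comm _ _
          linarith
    have h4 : |deriv x t| = deriv y t := le_antisymm hxy hfin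
    have h5 : (deriv y t) ^ 2 = (deriv x t) ^ 2 := by
      rw [← sq_abs (deriv x t), h4]
    rw [h5, sub_self, Real.sqrt_zero]
  rw [P1Length, intervalIntegral.integral_of_le hT]
  apply integral_eq_zero_of_ae
  exact ae_restrict_of_ae_restrict_of_subset Ioc_subset_Icc_self main_ae

end MainProof


section ReachProof

open Filter Topology

set_option maxHeartbeats 1000000 in
lemma P1Reaches_boundary {x₁ y₁ z₁ : ℝ} (hy : 0 < y₁) (hx : |x₁| ≤ y₁)
    (hz₁ : z₁ = (2 * ((|x₁| + y₁) / 2) ^ 3 - |x₁| ^ 3) / 6) :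
    P1Reaches (x₁, y₁, z₁) := by
  set c : ℝ := |x₁| + y₁ with hc
  have ha0 : 0 ≤ |x₁| := abs_nonneg x₁
  have hc2 : c / 2 ≤ y₁ := by rw [hc]; linarith
  have hcy : y₁ ≤ c := by rw [hc]; linarith
  have hc0 : 0 ≤ c := by linarith
  have hca : c - y₁ = |x₁| := by rw [hc]; ring
  set σ : ℝ := if x₁ < 0 then -1 else 1 with hσdef
  have hσ2 : σ ^ 2 = 1 := by rw [hσdef]; split_ifs <;> norm_num
  have hσabs : |σ| = 1 := by rw [hσdef]; split_ifs <;> norm_num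
  have hσa : σ * |x₁| = x₁ := by
    rw [hσdef]; split_ifs with h
    · rw [abs_of_neg h]; ring
    · rw [abs_of_nonneg (not_lt.1 h)]; ring
  set X : ℝ → ℝ := fun t => σ * min t (c - t) with hX
  set Z : ℝ → ℝ := fun t => ∫ u in (0:ℝ)..t, (min u (c - u)) ^ 2 / 2 with hZ
  have hZd : ∀ v, HasDerivAt Z ((min v (c - v)) ^ 2 / 2) v := fun v =>
    ((phi_cont c).integral_hasStrictDerivAt 0 v).hasDerivAt
  -- Lipschitz facts
  have hmin : LipschitzWith 1 (fun t : ℝ => min t (c - t)) := by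
    have h2 : LipschitzWith 1 (fun t : ℝ => c - t) := by
      apply LipschitzWith.mk_one
      intro p q
      rw [Real.dist_eq, Real.dist_eq]
      apply le_of_eq
      rw [show c - p - (c - q) = -(p - q) by ring, abs_neg]
    simpa using LipschitzWith.id.min h2
  have hKX : LipschitzWith 1 X := by
    apply LipschitzWith.mk_one
    intro p q
    have h1 := hmin.dist_le_mul p q
    rw [Real.dist_eq, Real.dist_eq] at h1 ⊢
    rw [hX]
    rw [show σ * min p (c - p) - σ * min q (c - q) = σ * (min p (c - p) - min q (c - q)) by ring,
      abs_mul, hσabs, one_mul]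
    simpa using h1
  have hZlip : LipschitzOnWith (c ^ 2 / 2).toNNReal Z (Icc 0 y₁) := by
    apply Convex.lipschitzOnWith_of_nnnorm_hasDerivWithin_le (convex_Icc 0 y₁)
      (f' := fun v => (min v (c - v)) ^ 2 / 2) (fun v hv => (hZd v).hasDerivWithinAt)
    intro v hv
    have hm0 : 0 ≤ min v (c - v) := le_min hv.1 (by linarith [hv.2])
    have hmc : min v (c - v) ≤ c := le_trans (min_le_left _ _) (le_trans hv.2 hcy)
    have h1 : (min v (c - v)) ^ 2 / 2 ≤ c ^ 2 / 2 := by nlinarith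
    rw [← NNReal.coe_le_coe, Real.coe_toNNReal _ (by positivity), coe_nnnorm,
      Real.norm_eq_abs, abs_of_nonneg (by positivity)]
    exact h1
  refine ⟨y₁, X, fun t => t, Z, ⟨hy.le, ?_, ?_⟩, ?_, rfl, ?_, ?_⟩
  · -- common Lipschitz constant
    refine ⟨1 + (c ^ 2 / 2).toNNReal, ?_, ?_, ?_⟩
    · exact myLip.mono_const (hKX.lipschitzOnWith) le_self_add
    · exact myLip.mono_const (LipschitzWith.id.lipschitzOnWith) le_self_add
    · exact myLip.mono_const hZlip le_add_self
  · -- a.e. derivative conditions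
    filter_upwards [ae_restrict_nmem_finite (μ := volume) (s := Icc 0 y₁)
      (N := {c / 2}) (Set.finite_singleton _)] with t htn
    rw [mem_singleton_iff] at htn
    have hYd : HasDerivAt (fun r : ℝ => r) 1 t := hasDerivAt_id t
    have hdX : ∃ d, HasDerivAt X d t ∧ |d| = 1 := by
      rcases lt_or_gt_of_ne htn with hlt | hgt
      · refine ⟨σ, ?_, hσabs⟩
        have hev : X =ᶠ[𝓝 t] (fun r => σ * r) := by
          filter_upwards [Iio_mem_nhds hlt] with r hr
          rw [hX]
          simp only
          rw [min_eq_left (by rw [mem_Iio] at hr; linarith)]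
        exact hev.hasDerivAt_iff.2 (by simpa using (hasDerivAt_id t).const_mul σ)
      · refine ⟨-σ, ?_, by rw [abs_neg]; exact hσabs⟩
        have hev : X =ᶠ[𝓝 t] (fun r => σ * (c - r)) := by
          filter_upwards [Ioi_mem_nhds hgt] with r hr
          rw [hX]
          simp only
          rw [min_eq_right (by rw [mem_Ioi] at hr; linarith)]
        refine hev.hasDerivAt_iff.2 ?_
        have := ((hasDerivAt_id t).const_sub c).const_mul σ
        simpa using this
      -- end
    obtain ⟨d, hdX, hd1⟩ := hdX
    refine ⟨by rw [hdX.deriv]; exact hdX, by rw [hYd.deriv]; exact hYd,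
      by rw [(hZd t).deriv]; exact hZd t, ?_, ?_⟩
    · rw [hdX.deriv, hYd.deriv, hd1]
    · rw [(hZd t).deriv, hYd.deriv, hX]
      simp only
      rw [mul_one, mul_pow, hσ2, one_mul]
  · -- X 0 = 0
    rw [hX]
    simp only
    rw [min_eq_left (by linarith), mul_zero]
  · -- Z 0 = 0
    rw [hZ]
    simp only [intervalIntegral.integral_same]
  · -- endpoint
    have e1 : X y₁ = x₁ := by
      rw [hX]
      simp only
      rw [show c - y₁ = |x₁| from hca, min_eq_right hx, hσa]
    have e3 : Z y₁ = z₁ := by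
      rw [hZ]
      simp only
      rw [phi_integral hc2 hcy, hca, hz₁]
    rw [e1, e3]

end ReachProof


/-- A point `q₁` of the upper boundary surfaces `S₁ ∪ S₂` of the attainable set is
reachable from the origin, but `d(q₁) = 0`: every P1-admissible curve from the
origin to `q₁` has sub-Lorentzian length `0`. -/
theorem P1dist_upper_boundary (x₁ y₁ z₁ : ℝ) (hy : 0 < y₁) (hx : |x₁| ≤ y₁)
    (hz : z₁ = (y₁ ^ 3 + 3 * x₁ ^ 2 * y₁ + 3 * |x₁| * y₁ ^ 2 - 3 * |x₁| ^ 3) / 24) :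
    P1Reaches (x₁, y₁, z₁) ∧
      (∀ (T : ℝ) (x y z : ℝ → ℝ), P1Admissible T x y z →
        x 0 = 0 → y 0 = 0 → z 0 = 0 → (x T, y T, z T) = (x₁, y₁, z₁) →
        P1Length T x y = 0) ∧
      P1dist (x₁, y₁, z₁) = 0 := by
  have hz₁ : z₁ = (2 * ((|x₁| + y₁) / 2) ^ 3 - |x₁| ^ 3) / 6 := by
    rw [hz]
    linear_combination (-(y₁ / 8)) * (sq_abs x₁)
  have hzero := P1Length_eq_zero_of_reaches_boundary hy hx hz₁
  refine ⟨P1Reaches_boundary hy hx hz₁,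
    fun T x y z hadm h1 h2 h3 h4 => hzero T x y z hadm h1 h2 h3 h4, ?_⟩
  rw [P1dist]
  have hset : (insert 0 {l : ℝ | ∃ (T : ℝ) (x y z : ℝ → ℝ), P1Admissible T x y z ∧
      x 0 = 0 ∧ y 0 = 0 ∧ z 0 = 0 ∧ (x T, y T, z T) = (x₁, y₁, z₁) ∧ l = P1Length T x y})
      = {0} := by
    apply subset_antisymm
    · apply insert_subset_iff.2
      refine ⟨rfl, ?_⟩
      rintro l ⟨T, x, y, z, hadm, h1, h2, h3, h4, rfl⟩
      rw [mem_singleton_iff]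
      exact hzero T x y z hadm h1 h2 h3 h4
    · intro r hr
      rw [mem_singleton_iff] at hr
      rw [hr]
      exact mem_insert _ _
  rw [hset, csSup_singleton]
end
end

section
/- For every τ ∈ (0, π], the quantity J₀(τ) = cos(3τ) + (8τ² − 1)·cos τ − 4τ·sin τ is strictly negative. (This follows from the identity d/dτ (J₀(τ)/sin τ) = −2(2τ − sin 2τ)²/sin² τ < 0 on (0, π) and J₀(τ)/sin τ → 0 as τ → 0⁺.) -/
open Real Set

noncomputable def Jf (τ : ℝ) : ℝ :=
  Real.cos (3 * τ) + (8 * τ ^ 2 - 1) * Real.cos τ - 4 * τ * Real.sin τ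

noncomputable def Jh (τ : ℝ) : ℝ := Jf τ / Real.sin τ

lemma Jf_hasDerivAt (τ : ℝ) :
    HasDerivAt Jf (-3 * Real.sin (3 * τ) + 12 * τ * Real.cos τ - (8 * τ ^ 2 + 3) * Real.sin τ) τ := by
  have hlin : HasDerivAt (fun τ : ℝ => 3 * τ) 3 τ := by
    simpa using (hasDerivAt_id τ).const_mul 3
  have h1 : HasDerivAt (fun τ : ℝ => Real.cos (3 * τ)) (-Real.sin (3 * τ) * 3) τ :=
    (Real.hasDerivAt_cos (3 * τ)).comp τ hlin
  have h2 : HasDerivAt (fun τ : ℝ => (8 * τ ^ 2 - 1) * Real.cos τ)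
      ((8 * (2 * τ)) * Real.cos τ + (8 * τ ^ 2 - 1) * (-Real.sin τ)) τ := by
    have ha : HasDerivAt (fun τ : ℝ => 8 * τ ^ 2 - 1) (8 * (2 * τ)) τ := by
      simpa using (((hasDerivAt_pow 2 τ).const_mul 8).sub_const 1)
    exact ha.mul (Real.hasDerivAt_cos τ)
  have h3 : HasDerivAt (fun τ : ℝ => 4 * τ * Real.sin τ)
      (4 * Real.sin τ + 4 * τ * Real.cos τ) τ := by
    have ha : HasDerivAt (fun τ : ℝ => 4 * τ) 4 τ := by
      simpa using (hasDerivAt_id τ).const_mul 4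
    exact ha.mul (Real.hasDerivAt_sin τ)
  have := (h1.add h2).sub h3
  refine HasDerivAt.congr_deriv this (Eq.symm ?_)
  ring

lemma Jh_hasDerivAt (τ : ℝ) (h0 : 0 < τ) (h1 : τ < Real.pi) :
    HasDerivAt Jh (-2 * (2 * τ - Real.sin (2 * τ)) ^ 2 / (Real.sin τ) ^ 2) τ := by
  have hs : Real.sin τ ≠ 0 := ne_of_gt (Real.sin_pos_of_pos_of_lt_pi h0 h1)
  have := (Jf_hasDerivAt τ).div (Real.hasDerivAt_sin τ) hs
  refine HasDerivAt.congr_deriv this (Eq.symm ?_)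
  rw [div_eq_div_iff (by positivity) (by positivity)]
  have hc3 := Real.cos_three_mul τ
  have hs3 := Real.sin_three_mul τ
  have hs2 := Real.sin_two_mul τ
  unfold Jf
  rw [hc3, hs3, hs2]
  linear_combination (-(12 * Real.sin τ ^ 2 - 4 * Real.cos τ ^ 2 - 8 * τ ^ 2) * Real.sin τ ^ 2) *
    (Real.sin_sq_add_cos_sq τ)

lemma Jh_strictAnti : StrictAntiOn Jh (Ioo 0 Real.pi) := by
  apply strictAntiOn_of_deriv_neg (convex_Ioo 0 Real.pi)
  · intro x hx
    exact ((Jh_hasDerivAt x hx.1 hx.2).continuousAt).continuousWithinAt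
  · intro x hx
    rw [interior_Ioo] at hx
    rw [(Jh_hasDerivAt x hx.1 hx.2).deriv]
    have hsin : Real.sin (2 * x) < 2 * x := Real.sin_lt (by linarith [hx.1])
    have hs : 0 < Real.sin x := Real.sin_pos_of_pos_of_lt_pi hx.1 hx.2
    have hpos : 0 < 2 * x - Real.sin (2 * x) := by linarith
    have := pow_pos hpos 2
    apply div_neg_of_neg_of_pos (by nlinarith) (by positivity)

lemma Jf_eq (τ : ℝ) : Jf τ = 8 * τ ^ 2 * Real.cos τ - 4 * τ * Real.sin τ
    - 4 * (Real.sin τ)^2 * Real.cos τ := by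
  unfold Jf
  rw [Real.cos_three_mul]
  linear_combination (4 * Real.cos τ) * (Real.sin_sq_add_cos_sq τ)

lemma Jh_le_lin (σ : ℝ) (h0 : 0 < σ) (h1 : σ ≤ Real.pi / 2) :
    Jh σ ≤ 4 * Real.pi * σ := by
  have hσπ : σ < Real.pi := lt_of_le_of_lt h1 (by linarith [Real.pi_pos])
  have hs : 0 < Real.sin σ := Real.sin_pos_of_pos_of_lt_pi h0 hσπ
  have hc : 0 ≤ Real.cos σ := Real.cos_nonneg_of_mem_Icc ⟨by linarith, h1⟩
  have hc1 : Real.cos σ ≤ 1 := Real.cos_le_one σ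
  have hsl : 2 / Real.pi * σ ≤ Real.sin σ := Real.mul_le_sin (le_of_lt h0) h1
  rw [Jh, div_le_iff₀ hs, Jf_eq]
  have h8 : 8 * σ ^ 2 ≤ 4 * Real.pi * σ * Real.sin σ := by
    have := mul_le_mul_of_nonneg_left hsl (by positivity : (0:ℝ) ≤ 4 * Real.pi * σ)
    have hπ : 4 * Real.pi * σ * (2 / Real.pi * σ) = 8 * σ ^ 2 := by
      field_simp; ring
    linarith [hπ ▸ this]
  nlinarith [mul_nonneg (mul_nonneg (by norm_num : (0:ℝ) ≤ 4) (sq_nonneg (Real.sin σ))) hc,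
    mul_nonneg (le_of_lt h0) (le_of_lt hs), sq_nonneg σ]

lemma Jh_nonpos (τ : ℝ) (h0 : 0 < τ) (h1 : τ < Real.pi) : Jh τ ≤ 0 := by
  by_contra hpos
  push_neg at hpos
  set σ := min (τ / 2) (min (Real.pi / 4) (Jh τ / (4 * Real.pi + 1))) with hσ
  have hπ := Real.pi_pos
  have hσ0 : 0 < σ := by
    apply lt_min (by linarith) (lt_min (by linarith) (by positivity))
  have hστ : σ < τ := lt_of_le_of_lt (min_le_left _ _) (by linarith)
  have hσπ2 : σ ≤ Real.pi / 2 := le_trans (le_trans (min_le_right _ _) (min_le_left _ _)) (by linarith)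
  have hmem1 : σ ∈ Ioo 0 Real.pi := ⟨hσ0, lt_of_le_of_lt hσπ2 (by linarith)⟩
  have hmem2 : τ ∈ Ioo 0 Real.pi := ⟨h0, h1⟩
  have hlt : Jh τ < Jh σ := Jh_strictAnti hmem1 hmem2 hστ
  have hle : Jh σ ≤ 4 * Real.pi * σ := Jh_le_lin σ hσ0 hσπ2
  have hσle : σ ≤ Jh τ / (4 * Real.pi + 1) := le_trans (min_le_right _ _) (min_le_right _ _)
  have : 4 * Real.pi * σ ≤ 4 * Real.pi * (Jh τ / (4 * Real.pi + 1)) :=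
    mul_le_mul_of_nonneg_left hσle (by positivity)
  have hfrac : 4 * Real.pi * (Jh τ / (4 * Real.pi + 1)) < Jh τ := by
    rw [mul_div_assoc', div_lt_iff₀ (by positivity)]
    nlinarith
  linarith

/-- The leading term `J₀(τ) = cos 3τ + (8τ² − 1) cos τ − 4τ sin τ` of the Jacobian
of the sub-Lorentzian exponential mapping of the first flat Martinet problem is
strictly negative on `(0, π]`. -/
theorem J0_neg (τ : ℝ) (h0 : 0 < τ) (hπ : τ ≤ Real.pi) :
    Real.cos (3 * τ) + (8 * τ ^ 2 - 1) * Real.cos τ - 4 * τ * Real.sin τ < 0 := by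
  have hπ0 := Real.pi_pos
  rcases eq_or_lt_of_le hπ with heq | hlt
  · subst heq
    rw [show (3:ℝ) * Real.pi = Real.pi + 2 * Real.pi by ring, Real.cos_add_two_pi,
      Real.cos_pi, Real.sin_pi]
    nlinarith
  · have hs : 0 < Real.sin τ := Real.sin_pos_of_pos_of_lt_pi h0 hlt
    have hmem1 : τ / 2 ∈ Ioo 0 Real.pi := ⟨by linarith, by linarith⟩
    have hmem2 : τ ∈ Ioo 0 Real.pi := ⟨h0, hlt⟩
    have h1 : Jh τ < Jh (τ / 2) := Jh_strictAnti hmem1 hmem2 (by linarith)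
    have h2 : Jh (τ / 2) ≤ 0 := Jh_nonpos (τ / 2) (by linarith) (by linarith)
    have h3 : Jh τ < 0 := lt_of_lt_of_le h1 h2
    have : Jf τ < 0 := by
      have := mul_neg_of_neg_of_pos h3 hs
      rwa [Jh, div_mul_cancel₀ _ (ne_of_gt hs)] at this
    simpa [Jf] using this
end

section
/- Let c > 0 and let φ, x, y, z : [0,T] → ℝ be continuously differentiable functions satisfying the normal Hamiltonian system φ'(t) = −c·x(t), x'(t) = sinh φ(t), y'(t) = cosh φ(t), z'(t) = x(t)²·cosh φ(t)/2 on [0,T], with initial conditions φ(0) > 0 and x(0) = y(0) = z(0) = 0. Suppose moreover that x(s) > 0 for all s ∈ (0,T). Then for every t ∈ (0,T]: x(t)²·y(t) < 6·z(t) and 24·z(t) < y(t)³ + 3x(t)²y(t) + 3x(t)y(t)² − 3x(t)³. -/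
open Set

private lemma aux_pos_of_deriv (T : ℝ) (f g : ℝ → ℝ)
    (hf : ∀ t ∈ Icc (0:ℝ) T, HasDerivAt f (g t) t)
    (h0 : f 0 = 0) (hg : ∀ t ∈ Ioo (0:ℝ) T, 0 < g t) :
    ∀ t ∈ Ioc (0:ℝ) T, 0 < f t := by
  intro t ht
  have hT : (0:ℝ) < T := lt_of_lt_of_le ht.1 ht.2
  have hmono : StrictMonoOn f (Icc (0:ℝ) T) := by
    apply strictMonoOn_of_deriv_pos (convex_Icc 0 T)
    · exact fun s hs => (hf s hs).continuousAt.continuousWithinAt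
    · intro s hs
      rw [interior_Icc] at hs
      rw [(hf s (Ioo_subset_Icc_self hs)).deriv]
      exact hg s hs
  have := hmono ⟨le_refl 0, hT.le⟩ ⟨ht.1.le, ht.2⟩ ht.1
  linarith

/-- A normal extremal of the first flat Martinet sub-Lorentzian problem with `c > 0`,
`φ(0) > 0`, starting at the origin and staying in `{x > 0}`, stays strictly between
the lower boundary surface `z = x³/6` and the upper boundary surface
`z = (−3x³ + 3x²y + 3xy² + y³)/24` of the attainable set. -/
theorem normal_extremal_between_boundaries
    (c T : ℝ) (hc : 0 < c) (φ x y z : ℝ → ℝ)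
    (hφ : ∀ t ∈ Icc (0:ℝ) T, HasDerivAt φ (-(c * x t)) t)
    (hx : ∀ t ∈ Icc (0:ℝ) T, HasDerivAt x (Real.sinh (φ t)) t)
    (hy : ∀ t ∈ Icc (0:ℝ) T, HasDerivAt y (Real.cosh (φ t)) t)
    (hz : ∀ t ∈ Icc (0:ℝ) T, HasDerivAt z (x t ^ 2 * Real.cosh (φ t) / 2) t)
    (hφ0 : 0 < φ 0) (hx0 : x 0 = 0) (hy0 : y 0 = 0) (hz0 : z 0 = 0)
    (hxpos : ∀ s ∈ Ioo (0:ℝ) T, 0 < x s) :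
    ∀ t ∈ Ioc (0:ℝ) T,
      x t ^ 2 * y t < 6 * z t ∧
      24 * z t < y t ^ 3 + 3 * x t ^ 2 * y t + 3 * x t * y t ^ 2 - 3 * x t ^ 3 := by
  -- v = y - x > 0 on (0,T]
  have hv : ∀ s ∈ Ioc (0:ℝ) T, 0 < y s - x s := by
    apply aux_pos_of_deriv T _ (fun s => Real.cosh (φ s) - Real.sinh (φ s))
    · exact fun s hs => (hy s hs).sub (hx s hs)
    · simp [hx0, hy0]
    · intro s _
      have h1 := Real.cosh_sub_sinh (φ s)
      have h2 := Real.exp_pos (-(φ s))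
      linarith
  -- u = x + y > 0 on (0,T]
  have hu : ∀ s ∈ Ioc (0:ℝ) T, 0 < x s + y s := by
    apply aux_pos_of_deriv T _ (fun s => Real.sinh (φ s) + Real.cosh (φ s))
    · exact fun s hs => (hx s hs).add (hy s hs)
    · simp [hx0, hy0]
    · intro s _
      have h1 := Real.sinh_add_cosh (φ s)
      have h2 := Real.exp_pos (φ s)
      linarith
  -- y > 0 on (0,T]
  have hypos : ∀ s ∈ Ioc (0:ℝ) T, 0 < y s := by
    apply aux_pos_of_deriv T _ (fun s => Real.cosh (φ s)) hy hy0
    intro s _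
    exact Real.cosh_pos _
  -- H = y cosh φ - x sinh φ > 0 on (0,T]
  have hH : ∀ s ∈ Ioc (0:ℝ) T, 0 < y s * Real.cosh (φ s) - x s * Real.sinh (φ s) := by
    intro s hs
    have hu' := hu s hs
    have hv' := hv s hs
    rw [Real.cosh_eq, Real.sinh_eq]
    nlinarith [mul_pos hu' (Real.exp_pos (-(φ s))), mul_pos hv' (Real.exp_pos (φ s))]
  -- G = x cosh φ - y sinh φ > 0 on (0,T]
  have hG : ∀ s ∈ Ioc (0:ℝ) T, 0 < x s * Real.cosh (φ s) - y s * Real.sinh (φ s) := by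
    apply aux_pos_of_deriv T _
      (fun s => c * x s * (y s * Real.cosh (φ s) - x s * Real.sinh (φ s)))
    · intro s hs
      have h1 := ((hx s hs).mul ((hφ s hs).cosh)).sub ((hy s hs).mul ((hφ s hs).sinh))
      refine h1.congr_deriv ?_
      ring
    · simp [hx0, hy0]
    · intro s hs
      exact mul_pos (mul_pos hc (hxpos s hs)) (hH s ⟨hs.1, hs.2.le⟩)
  -- F = 6z - x²y > 0 on (0,T]
  have hF : ∀ s ∈ Ioc (0:ℝ) T, 0 < 6 * z s - x s ^ 2 * y s := by
    apply aux_pos_of_deriv T _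
      (fun s => 2 * x s * (x s * Real.cosh (φ s) - y s * Real.sinh (φ s)))
    · intro s hs
      have h1 := ((hz s hs).const_mul 6).sub (((hx s hs).pow 2).mul (hy s hs))
      refine h1.congr_deriv ?_
      push_cast [Pi.pow_apply]
      ring
    · simp [hx0, hy0, hz0]
    · intro s hs
      have := hxpos s hs
      exact mul_pos (by linarith) (hG s ⟨hs.1, hs.2.le⟩)
  -- E = y³ + 3x²y + 3xy² - 3x³ - 24z > 0 on (0,T]
  have hE : ∀ s ∈ Ioc (0:ℝ) T,
      0 < y s ^ 3 + 3 * x s ^ 2 * y s + 3 * x s * y s ^ 2 - 3 * x s ^ 3 - 24 * z s := by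
    apply aux_pos_of_deriv T _
      (fun s => 3 * Real.exp (φ s) * ((y s - x s) * (y s + 3 * x s)))
    · intro s hs
      have h1 := (((((hy s hs).pow 3).add
          ((((hx s hs).pow 2).const_mul 3).mul (hy s hs))).add
          (((hx s hs).const_mul 3).mul ((hy s hs).pow 2))).sub
          (((hx s hs).pow 3).const_mul 3)).sub ((hz s hs).const_mul 24)
      refine h1.congr_deriv ?_
      have hexp : Real.exp (φ s) = Real.sinh (φ s) + Real.cosh (φ s) :=
        (Real.sinh_add_cosh _).symm
      rw [hexp]
      push_cast [Pi.pow_apply]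
      ring
    · simp [hx0, hy0, hz0]
    · intro s hs
      have h1 := hxpos s hs
      have h2 := hv s ⟨hs.1, hs.2.le⟩
      have h3 := hypos s ⟨hs.1, hs.2.le⟩
      have := Real.exp_pos (φ s)
      apply mul_pos (by linarith)
      exact mul_pos h2 (by linarith)
  intro t ht
  have h1 := hF t ht
  have h2 := hE t ht
  constructor <;> linarith
end
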